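/- arXiv:2110.15330 — 2 statements merged into one kernel-verified Lean document; each statement's English description precedes it below -/
import Mathlib

section
/- Let d = dA = dB ≥ 2 and let σ_A ⊗ σ_B be any product density matrix on ℂ^d ⊗ ℂ^d. Then σ_A ⊗ σ_B is game-majorized by the maximally entangled state: R_{T,p}(σ_A ⊗ σ_B) ≤ R_{T,p}(φ⁺) for every game (T,p); moreover, for the game with p = 1 and T the deterministic transition matrix with t_{1|z'} = 1 for all z', one has R_{T,1}(σ_A ⊗ σ_B) ≤ 1/d < 1 = R_{T,1}(φ⁺), so the game-majorization is strict. -/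
open Matrix Kronecker
open scoped ComplexOrder

noncomputable section

open scoped Classical

/-- Square complex matrices of size `n`. -/
abbrev Mat (n : ℕ) := Matrix (Fin n) (Fin n) ℂ

/-- Bipartite matrices on `ℂ^a ⊗ ℂ^b`. -/
abbrev BMat (a b : ℕ) := Matrix (Fin a × Fin b) (Fin a × Fin b) ℂ

/-- A density matrix: positive semidefinite with trace one. -/
def IsDensity {ι : Type} [Fintype ι] (ρ : Matrix ι ι ℂ) : Prop :=
  ρ.PosSemidef ∧ ρ.trace = 1

/-- The maximally mixed state `I/n`. -/
def uMat (n : ℕ) : Mat n := (n : ℂ)⁻¹ • 1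

/-- Choi matrix of a map on matrices. -/
def choi {ι κ : Type} [Fintype ι] [DecidableEq ι]
    (Φ : Matrix ι ι ℂ → Matrix κ κ ℂ) : Matrix (ι × κ) (ι × κ) ℂ :=
  fun p q => Φ (Matrix.single p.1 q.1 1) p.2 q.2

/-- Quantum channel: linear, trace preserving, completely positive map. -/
def IsCPTP {ι κ : Type} [Fintype ι] [DecidableEq ι] [Fintype κ]
    (Φ : Matrix ι ι ℂ → Matrix κ κ ℂ) : Prop :=
  IsLinearMap ℂ Φ ∧ (∀ X, (Φ X).trace = X.trace) ∧ (choi Φ).PosSemidef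

/-- Completely positive (not necessarily trace-preserving) map. -/
def IsCP {ι κ : Type} [Fintype ι] [DecidableEq ι] [Fintype κ]
    (Φ : Matrix ι ι ℂ → Matrix κ κ ℂ) : Prop :=
  IsLinearMap ℂ Φ ∧ (choi Φ).PosSemidef

/-- Partial trace over the first tensor factor. -/
def ptraceA {α β : Type} [Fintype α] (M : Matrix (α × β) (α × β) ℂ) :
    Matrix β β ℂ := fun j j' => ∑ i, M (i, j) (i, j')

/-- Partial trace over the second tensor factor. -/
def ptraceB {α β : Type} [Fintype β] (M : Matrix (α × β) (α × β) ℂ) :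
    Matrix α α ℂ := fun i i' => ∑ j, M (i, j) (i', j)

/-- The map `Φ ⊗ id` acting on the first tensor factor. -/
def lTensorId {α α' β : Type} (Φ : Matrix α α ℂ → Matrix α' α' ℂ)
    (X : Matrix (α × β) (α × β) ℂ) : Matrix (α' × β) (α' × β) ℂ :=
  fun p q => Φ (fun k k' => X (k, p.2) (k', q.2)) p.1 q.1

/-- The map `id ⊗ Φ` acting on the second tensor factor. -/
def rTensorId {α β β' : Type} (Φ : Matrix β β ℂ → Matrix β' β' ℂ)
    (X : Matrix (α × β) (α × β) ℂ) : Matrix (α × β') (α × β') ℂ :=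
  fun p q => Φ (fun k k' => X (p.1, k) (q.1, k')) p.2 q.2

/-- `A ↛ B'` semi-causality of a bipartite channel. -/
def SemiCausal {a b b' : ℕ} (N : BMat a b → BMat a b') : Prop :=
  ∀ M : Mat a → Mat a, IsCPTP M →
    ∀ X : BMat a b, ptraceA (N (lTensorId M X)) = ptraceA (N X)

/-- Conditional unitality of a bipartite channel. -/
def CondUnital {a b b' : ℕ} (N : BMat a b → BMat a b') : Prop :=
  ∀ ρ : Mat b, IsDensity ρ →
    ∃ σ : Mat b', IsDensity σ ∧ N (uMat a ⊗ₖ ρ) = uMat a ⊗ₖ σ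

/-- Conditionally unital semi-causal channels. -/
def CUSC {a b b' : ℕ} (N : BMat a b → BMat a b') : Prop :=
  IsCPTP N ∧ CondUnital N ∧ SemiCausal N

/-- The channel `X ↦ V X V†` associated with a matrix `V`. -/
def isomChannel {a a' : ℕ} (V : Matrix (Fin a') (Fin a) ℂ) (X : Mat a) : Mat a' :=
  V * X * Vᴴ

/-- Conditional majorization `σ ≾_A ρ`. -/
def CondMajor {a' b' a b : ℕ} (σ : BMat a' b') (ρ : BMat a b) : Prop :=
  (a ≤ a' ∧ ∃ V : Matrix (Fin a') (Fin a) ℂ, Vᴴ * V = 1 ∧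
      ∃ N : BMat a b → BMat a b', CUSC N ∧ σ = lTensorId (isomChannel V) (N ρ)) ∨
  (a' ≤ a ∧ ∃ U : Matrix (Fin a) (Fin a') ℂ, Uᴴ * U = 1 ∧
      ∃ N : BMat a b → BMat a b', CUSC N ∧ lTensorId (isomChannel U) σ = N ρ)

/-- The tensor product `ρ_{AB} ⊗ τ_{A'B'}` regrouped as a state on `(AA')(BB')`. -/
def prodState {a b a' b' : ℕ} (ρ : BMat a b) (τ : BMat a' b') :
    BMat (a * a') (b * b') := fun p q =>
  ρ ((finProdFinEquiv.symm p.1).1, (finProdFinEquiv.symm p.2).1)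
    ((finProdFinEquiv.symm q.1).1, (finProdFinEquiv.symm q.2).1) *
  τ ((finProdFinEquiv.symm p.1).2, (finProdFinEquiv.symm p.2).2)
    ((finProdFinEquiv.symm q.1).2, (finProdFinEquiv.symm q.2).2)

/-- A conditional entropy: a real function on bipartite density matrices of all
finite dimensions, monotone under conditional majorization, additive under tensor
products, and normalized to `1` on the one-qubit maximally mixed state. -/
structure CondEntropy where
  H : ∀ {a b : ℕ}, BMat a b → ℝ
  mono : ∀ {a b a' b' : ℕ} (ρ : BMat a b) (σ : BMat a' b'),
    IsDensity ρ → IsDensity σ → CondMajor σ ρ → H ρ ≤ H σ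
  additive : ∀ {a b a' b' : ℕ} (ρ : BMat a b) (τ : BMat a' b'),
    IsDensity ρ → IsDensity τ → H (prodState ρ τ) = H ρ + H τ
  normalized : H (uMat 2 ⊗ₖ (1 : Mat 1)) = 1

/-- Maximally entangled state `φ⁺` on `ℂ^d ⊗ ℂ^d`. -/
def maxEnt (d : ℕ) : BMat d d :=
  fun p q => if p.1 = p.2 ∧ q.1 = q.2 then (d : ℂ)⁻¹ else 0

/-- The sum of the `k` largest values of `f`. -/
def sumTopK {ι : Type} [Fintype ι] [DecidableEq ι] (k : ℕ) (f : ι → ℝ) : ℝ :=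
  (Finset.univ.powerset.filter fun s : Finset ι => s.card ≤ k).sup'
    ⟨∅, Finset.mem_filter.mpr ⟨Finset.mem_powerset.mpr (Finset.empty_subset _), by simp⟩⟩
    fun s => ∑ i ∈ s, f i

/-- Ky Fan `k`-norm (sum of the `k` largest eigenvalues) of a hermitian matrix. -/
def kyFan {ι : Type} [Fintype ι] [DecidableEq ι] (k : ℕ) (X : Matrix ι ι ℂ) : ℝ :=
  if h : X.IsHermitian then sumTopK k h.eigenvalues else 0

/-- The rank-one projector `|v⟩⟨v|`. -/
def projv {n : ℕ} (v : Fin n → ℂ) : Mat n := fun i j => v i * star (v j)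

/-- A rank-one projective measurement, given by an orthonormal family of vectors. -/
def IsRankOneMeas {n : ℕ} (u : Fin n → Fin n → ℂ) : Prop :=
  ∀ z z', (∑ i, star (u z i) * u z' i) = if z = z' then 1 else 0

/-- A column-stochastic matrix. -/
def ColStochastic {a c : ℕ} (T : Matrix (Fin a) (Fin c) ℝ) : Prop :=
  (∀ w z, 0 ≤ T w z) ∧ ∀ z, ∑ w, T w z = 1

/-- Reward of the bipartite gambling game `(T, 0)` (no adversary). -/
def R0 {a b c : ℕ} (T : Matrix (Fin a) (Fin c) ℝ) (ρ : BMat a b) : ℝ :=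
  ⨆ u : {u : Fin b → Fin b → ℂ // IsRankOneMeas u}, ⨆ f : Fin b → Fin c,
    ∑ z, ∑ w, T w (f z) *
      kyFan (w.1 + 1)
        (ptraceB (((1 : Mat a) ⊗ₖ projv (u.1 z)) * ρ * ((1 : Mat a) ⊗ₖ projv (u.1 z))))

/-- Reward of the bipartite gambling game `(T, p)`. -/
def Rgame {a b c : ℕ} (T : Matrix (Fin a) (Fin c) ℝ) (p : ℝ) (ρ : BMat a b) : ℝ :=
  p * (⨅ v : {v : Fin a → Fin a → ℂ // IsRankOneMeas v},
        R0 T (∑ j, (projv (v.1 j) ⊗ₖ (1 : Mat b)) * ρ * (projv (v.1 j) ⊗ₖ (1 : Mat b)))) +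
  (1 - p) * R0 T ρ

/-- Reward of a quantum-channel gambling game `ρ_{ABX} = Σ_x p_x ρ^{(x)}_{AB} ⊗ |x⟩⟨x|`
for a channel `N` with output system `A`. -/
def Rch {n m dA b ℓ : ℕ} (N : Mat n → Mat m)
    (p : Fin ℓ → ℝ) (ρx : Fin ℓ → BMat dA b) : ℝ :=
  ⨆ E : {E : Mat dA → Mat n // IsCPTP E},
    ∑ x, p x * kyFan (x.1 + 1) (lTensorId (fun Y => N (E.1 Y)) (ρx x))

/-- The classical channel induced by a column-stochastic transition matrix. -/
def classicalChannel {x y : ℕ} (P : Matrix (Fin y) (Fin x) ℝ) : Mat x → Mat y :=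
  fun ρ => Matrix.of fun i j => if i = j then ∑ k, (P i k : ℂ) * ρ k k else 0

/-- Classical game reward `Prob_T` of a classical channel with transition matrix `P`. -/
def ProbT {yd xd wn zn : ℕ} (P : Matrix (Fin yd) (Fin xd) ℝ)
    (T : Matrix (Fin wn) (Fin zn) ℝ) : ℝ :=
  ∑ z, ⨆ x : Fin xd, ∑ w, T w z * sumTopK (w.1 + 1) (fun i => P i x)

/-- A joint probability matrix. -/
def JointProb {m n : ℕ} (P : Matrix (Fin m) (Fin n) ℝ) : Prop :=
  (∀ x y, 0 ≤ P x y) ∧ ∑ x, ∑ y, P x y = 1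

/-- A row-stochastic matrix. -/
def RowStochastic {n n' : ℕ} (t : Matrix (Fin n) (Fin n') ℝ) : Prop :=
  (∀ y w, 0 ≤ t y w) ∧ ∀ y, ∑ w, t y w = 1

/-- A doubly stochastic matrix. -/
def IsDoublyStochastic {m : ℕ} (d : Matrix (Fin m) (Fin m) ℝ) : Prop :=
  (∀ i j, 0 ≤ d i j) ∧ (∀ i, ∑ j, d i j = 1) ∧ (∀ j, ∑ i, d i j = 1)

/-- The quantum channel induced by a (doubly) stochastic matrix. -/
def dsChannel {m : ℕ} (d : Matrix (Fin m) (Fin m) ℝ) : Mat m → Mat m :=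
  fun ρ => Matrix.of fun x x' => if x = x' then ∑ y, (d x y : ℂ) * ρ y y else 0

/-- Diagonal bipartite state associated with a joint probability matrix. -/
def classicalState {m n : ℕ} (P : Matrix (Fin m) (Fin n) ℝ) : BMat m n :=
  Matrix.of fun p q => if p = q then (P p.1 p.2 : ℂ) else 0

/-- von Neumann entropy `S(ρ) = -Σ λ_i log₂ λ_i`. -/
def vnEntropy {ι : Type} [Fintype ι] [DecidableEq ι] (ρ : Matrix ι ι ℂ) : ℝ :=
  if h : ρ.IsHermitian then -∑ i, h.eigenvalues i * Real.logb 2 (h.eigenvalues i) else 0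

/-- von Neumann conditional entropy `H(A|B) = S(ρ_AB) - S(ρ_B)`. -/
def condVN {a b : ℕ} (ρ : BMat a b) : ℝ := vnEntropy ρ - vnEntropy (ptraceA ρ)

/-- Classical game reward for a classical bipartite state with joint distribution `q`
(`y` on `A`, `z` on `B`). -/
def ProbTstate {a b c : ℕ} (T : Matrix (Fin a) (Fin c) ℝ)
    (q : Matrix (Fin a) (Fin b) ℝ) : ℝ :=
  ∑ z, ⨆ z' : Fin c, ∑ w, T w z' * sumTopK (w.1 + 1) (fun y => q y z)


/- ### Auxiliary lemmas -/

section Aux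

variable {ι : Type} [Fintype ι] [DecidableEq ι]

lemma sumTopK_le_sum {k : ℕ} {f : ι → ℝ} (hf : ∀ i, 0 ≤ f i) :
    sumTopK k f ≤ ∑ i, f i := by
  apply Finset.sup'_le
  intro s hs
  exact Finset.sum_le_sum_of_subset_of_nonneg (Finset.subset_univ s) (fun i _ _ => hf i)

lemma zero_le_sumTopK (k : ℕ) (f : ι → ℝ) : 0 ≤ sumTopK k f := by
  have h : (∅ : Finset ι) ∈ Finset.univ.powerset.filter fun s : Finset ι => s.card ≤ k :=
    Finset.mem_filter.mpr ⟨Finset.mem_powerset.mpr (Finset.empty_subset _), by simp⟩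
  refine le_trans ?_ (Finset.le_sup' (fun s => ∑ i ∈ s, f i) h)
  simp

lemma single_le_sumTopK {k : ℕ} (hk : 1 ≤ k) (f : ι → ℝ) (i : ι) : f i ≤ sumTopK k f := by
  have h : ({i} : Finset ι) ∈ Finset.univ.powerset.filter fun s : Finset ι => s.card ≤ k :=
    Finset.mem_filter.mpr ⟨Finset.mem_powerset.mpr (Finset.subset_univ _), by simpa using hk⟩
  refine le_trans ?_ (Finset.le_sup' (fun s => ∑ i ∈ s, f i) h)
  simp

lemma sumTopK_one_le {f : ι → ℝ} {c : ℝ} (hc : 0 ≤ c) (hf : ∀ i, f i ≤ c) :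
    sumTopK 1 f ≤ c := by
  apply Finset.sup'_le
  intro s hs
  have hcard : s.card ≤ 1 := (Finset.mem_filter.mp hs).2
  rcases s.eq_empty_or_nonempty with rfl | hne
  · simpa using hc
  · have h1 : s.card = 1 := le_antisymm hcard (Finset.card_pos.mpr hne)
    obtain ⟨i, rfl⟩ := Finset.card_eq_one.mp h1
    simpa using hf i

lemma kyFan_nonneg (k : ℕ) (X : Matrix ι ι ℂ) : 0 ≤ kyFan k X := by
  unfold kyFan
  split
  · exact zero_le_sumTopK _ _
  · exact le_refl 0

lemma trace_eq_sum_eigenvalues {A : Matrix ι ι ℂ} (hA : A.IsHermitian) :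
    A.trace = ∑ i, (hA.eigenvalues i : ℂ) := by
  conv_lhs => rw [hA.spectral_theorem, Unitary.conjStarAlgAut_apply]
  rw [Matrix.trace_mul_cycle,
    show (star (hA.eigenvectorUnitary : Matrix ι ι ℂ)) * (hA.eigenvectorUnitary : Matrix ι ι ℂ) = 1
      from Unitary.coe_star_mul_self _, one_mul, Matrix.trace_diagonal]
  rfl

lemma trace_sq_eq_sum_eigenvalues_sq {A : Matrix ι ι ℂ} (hA : A.IsHermitian) :
    (A * A).trace = ∑ i, ((hA.eigenvalues i : ℂ))^2 := by
  set U : Matrix ι ι ℂ := (hA.eigenvectorUnitary : Matrix ι ι ℂ) with hU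
  set D : Matrix ι ι ℂ := Matrix.diagonal (RCLike.ofReal ∘ hA.eigenvalues) with hD
  have hsU : star U * U = 1 := Unitary.coe_star_mul_self _
  have h1 : A * A = U * (D * D) * star U := by
    conv_lhs => rw [hA.spectral_theorem, Unitary.conjStarAlgAut_apply]
    rw [← hU, ← hD]
    rw [Matrix.mul_assoc (U * D) (star U) (U * D * star U),
      ← Matrix.mul_assoc (star U) (U * D) (star U), ← Matrix.mul_assoc (star U) U D, hsU, one_mul]
    simp only [Matrix.mul_assoc]
  rw [h1, Matrix.trace_mul_cycle, hsU, one_mul, hD, Matrix.diagonal_mul_diagonal,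
    Matrix.trace_diagonal]
  simp [sq]

lemma kyFan_le_of_trace {X : Matrix ι ι ℂ} (hX : X.PosSemidef) {c : ℝ}
    (htr : X.trace = (c : ℂ)) (k : ℕ) : kyFan k X ≤ c := by
  have hH := hX.isHermitian
  have hsum : ∑ i, hH.eigenvalues i = c := by
    have := trace_eq_sum_eigenvalues hH
    rw [htr] at this
    exact_mod_cast this.symm
  rw [kyFan, dif_pos hH]
  calc sumTopK k hH.eigenvalues ≤ ∑ i, hH.eigenvalues i :=
        sumTopK_le_sum (fun i => hX.eigenvalues_nonneg i)
    _ = c := hsum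

lemma kyFan_rank_one {X : Matrix ι ι ℂ} (hX : X.PosSemidef) {c : ℝ} (hc : 0 < c)
    (htr : X.trace = (c : ℂ)) (htr2 : (X * X).trace = ((c^2 : ℝ) : ℂ)) {k : ℕ} (hk : 1 ≤ k) :
    kyFan k X = c := by
  have hH := hX.isHermitian
  have hsum : ∑ i, hH.eigenvalues i = c := by
    have := trace_eq_sum_eigenvalues hH
    rw [htr] at this
    exact_mod_cast this.symm
  have hsum2 : ∑ i, (hH.eigenvalues i)^2 = c^2 := by
    have := trace_sq_eq_sum_eigenvalues_sq hH
    rw [htr2] at this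
    have := this.symm
    push_cast at this
    exact_mod_cast this
  have hne : (Finset.univ : Finset ι).Nonempty := by
    by_contra h
    rw [Finset.not_nonempty_iff_eq_empty] at h
    rw [h, Finset.sum_empty] at hsum
    exact absurd hsum.symm (ne_of_gt hc)
  obtain ⟨i, _, hi⟩ := Finset.exists_max_image Finset.univ hH.eigenvalues hne
  have hmax : c ≤ hH.eigenvalues i := by
    have h1 : c^2 ≤ hH.eigenvalues i * c := by
      calc c^2 = ∑ j, (hH.eigenvalues j)^2 := hsum2.symm
        _ ≤ ∑ j, hH.eigenvalues i * hH.eigenvalues j := by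
            apply Finset.sum_le_sum
            intro j _
            rw [sq]
            exact mul_le_mul_of_nonneg_right (hi j (Finset.mem_univ j)) (hX.eigenvalues_nonneg j)
        _ = hH.eigenvalues i * c := by rw [← Finset.mul_sum, hsum]
    nlinarith [h1, hc]
  apply le_antisymm (kyFan_le_of_trace hX htr k)
  rw [kyFan, dif_pos hH]
  exact le_trans hmax (single_le_sumTopK hk _ i)

end Aux
section Proj

variable {n : ℕ}

lemma projv_conjTranspose (v : Fin n → ℂ) : (projv v)ᴴ = projv v := by
  ext i j
  simp [projv, Matrix.conjTranspose_apply, mul_comm]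

lemma projv_posSemidef (v : Fin n → ℂ) : (projv v).PosSemidef := by
  refine Matrix.PosSemidef.of_dotProduct_mulVec_nonneg ?_ ?_
  · exact projv_conjTranspose v
  · intro x
    have h : dotProduct (star x) ((projv v) *ᵥ x)
        = (∑ i, star (x i) * v i) * star (∑ i, star (x i) * v i) := by
      simp only [dotProduct, Matrix.mulVec, projv, Pi.star_apply]
      rw [star_sum, Finset.sum_mul_sum]
      refine Finset.sum_congr rfl fun i _ => ?_
      rw [Finset.mul_sum]
      refine Finset.sum_congr rfl fun j _ => ?_
      simp only [star_mul', star_star]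
      ring
    rw [h]
    exact mul_star_self_nonneg _

lemma meas_unit {u : Fin n → Fin n → ℂ} (hu : IsRankOneMeas u) (z : Fin n) :
    ∑ i, star (u z i) * u z i = 1 := by simpa using hu z z

lemma projv_mul_self {v : Fin n → ℂ} (h : ∑ i, star (v i) * v i = 1) :
    projv v * projv v = projv v := by
  ext i j
  simp only [Matrix.mul_apply, projv]
  calc ∑ k, v i * star (v k) * (v k * star (v j))
      = (v i * star (v j)) * ∑ k, star (v k) * v k := by
        rw [Finset.mul_sum]; exact Finset.sum_congr rfl fun k _ => by ring
    _ = v i * star (v j) := by rw [h, mul_one]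

lemma meas_sum_projv {u : Fin n → Fin n → ℂ} (hu : IsRankOneMeas u) :
    ∑ z, projv (u z) = 1 := by
  set B : Mat n := Matrix.of fun i z => u z i with hB
  have h1 : Bᴴ * B = 1 := by
    ext z z'
    simpa [hB, Matrix.mul_apply, Matrix.conjTranspose_apply, Matrix.one_apply] using hu z z'
  have h2 : B * Bᴴ = 1 := mul_eq_one_comm.mp h1
  ext i i'
  have h3 : (B * Bᴴ) i i' = (1 : Mat n) i i' := by rw [h2]
  simp only [hB, Matrix.mul_apply, Matrix.conjTranspose_apply, Matrix.of_apply] at h3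
  simpa [Matrix.sum_apply, projv] using h3

/-- standard basis measurement -/
lemma stdMeas (n : ℕ) : IsRankOneMeas (fun z i : Fin n => if z = i then 1 else 0) := by
  intro z z'
  have h1 : ∀ i, (star (if z = i then (1:ℂ) else 0)) * (if z' = i then 1 else 0)
      = if z = i then (if z' = i then 1 else 0) else 0 := by
    intro i; by_cases h : z = i <;> simp [h]
  simp only [h1, Finset.sum_ite_eq, Finset.mem_univ, if_true]
  by_cases h : z = z'
  · simp [h]
  · simp [h, Ne.symm h]

lemma star_meas {v : Fin n → Fin n → ℂ} (hv : IsRankOneMeas v) :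
    IsRankOneMeas (fun z i => star (v z i)) := by
  intro z z'
  calc (∑ i, star (star (v z i)) * star (v z' i)) = star (∑ i, star (v z i) * v z' i) := by
        rw [star_sum]
        refine Finset.sum_congr rfl fun i _ => ?_
        simp only [star_mul', star_star]
    _ = if z = z' then 1 else 0 := by
        rw [hv z z']; split <;> simp

end Proj

section Ptrace

variable {a b : ℕ}

lemma trace_ptraceB (M : BMat a b) : (ptraceB M).trace = M.trace := by
  simp [Matrix.trace, Matrix.diag, ptraceB, Fintype.sum_prod_type]

lemma ptraceB_isHermitian {M : BMat a b} (h : M.IsHermitian) : (ptraceB M).IsHermitian := by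
  ext i i'
  simp only [Matrix.conjTranspose_apply, ptraceB, star_sum]
  refine Finset.sum_congr rfl fun j _ => ?_
  have h2 : Mᴴ (i, j) (i', j) = M (i, j) (i', j) := by rw [h]
  simpa [Matrix.conjTranspose_apply] using h2

lemma ptraceB_posSemidef {M : BMat a b} (h : M.PosSemidef) : (ptraceB M).PosSemidef := by
  refine Matrix.PosSemidef.of_dotProduct_mulVec_nonneg ?_ ?_
  · exact ptraceB_isHermitian h.1
  · intro x
    set y : Fin b → (Fin a × Fin b → ℂ) := fun j p => if p.2 = j then x p.1 else 0 with hy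
    have hmv : ∀ (j : Fin b) (p : Fin a × Fin b),
        (M *ᵥ y j) p = ∑ i', M p (i', j) * x i' := by
      intro j p
      simp [Matrix.mulVec, dotProduct, hy, Fintype.sum_prod_type, mul_ite, mul_zero,
        Finset.sum_ite_eq']
    have hdot : ∀ j : Fin b, dotProduct (star (y j)) (M *ᵥ y j)
        = ∑ i, star (x i) * ∑ i', M (i, j) (i', j) * x i' := by
      intro j
      simp only [dotProduct, Pi.star_apply, Fintype.sum_prod_type]
      refine Finset.sum_congr rfl fun i _ => ?_
      rw [show (∑ j' : Fin b, star (y j (i, j')) * (M *ᵥ y j) (i, j'))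
          = ∑ j' : Fin b, (if j' = j then star (x i) * (M *ᵥ y j) (i, j') else 0) from
        Finset.sum_congr rfl fun j' _ => by by_cases hj : j' = j <;> simp [hy, hj]]
      rw [Finset.sum_ite_eq' Finset.univ j (fun j' => star (x i) * (M *ᵥ y j) (i, j'))]
      simp [hmv]
    have key : dotProduct (star x) ((ptraceB M) *ᵥ x)
        = ∑ j, dotProduct (star (y j)) (M *ᵥ y j) := by
      rw [show (∑ j, dotProduct (star (y j)) (M *ᵥ y j))
          = ∑ j, ∑ i, star (x i) * ∑ i', M (i, j) (i', j) * x i' from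
        Finset.sum_congr rfl fun j _ => hdot j]
      simp only [dotProduct, Matrix.mulVec, ptraceB, Pi.star_apply]
      rw [Finset.sum_comm]
      refine Finset.sum_congr rfl fun i _ => ?_
      simp only [Finset.sum_mul, Finset.mul_sum]
      rw [Finset.sum_comm]
    rw [key]
    exact Finset.sum_nonneg fun j _ => h.dotProduct_mulVec_nonneg _

end Ptrace
section Kron

variable {a b : ℕ}

lemma kron_conjTranspose (A : Mat a) (B : Mat b) : (A ⊗ₖ B)ᴴ = Aᴴ ⊗ₖ Bᴴ := by
  ext p q
  simp only [Matrix.conjTranspose_apply, Matrix.kroneckerMap_apply, star_mul']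

lemma one_kron_herm (w : Fin b → ℂ) :
    ((1 : Mat a) ⊗ₖ projv w)ᴴ = (1 : Mat a) ⊗ₖ projv w := by
  rw [kron_conjTranspose, Matrix.conjTranspose_one, projv_conjTranspose]

lemma kron_one_herm (w : Fin a → ℂ) :
    (projv w ⊗ₖ (1 : Mat b))ᴴ = projv w ⊗ₖ (1 : Mat b) := by
  rw [kron_conjTranspose, Matrix.conjTranspose_one, projv_conjTranspose]

lemma sandwich_psd {m : ℕ} {ρ N : Mat m} (hρ : ρ.PosSemidef) (hN : Nᴴ = N) :
    (N * ρ * N).PosSemidef := by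
  have := hρ.mul_mul_conjTranspose_same N
  rwa [hN] at this

lemma sandwich_psd' {ρ N : BMat a b} (hρ : ρ.PosSemidef) (hN : Nᴴ = N) :
    (N * ρ * N).PosSemidef := by
  have := hρ.mul_mul_conjTranspose_same N
  rwa [hN] at this

lemma one_kron_mul_apply (Q : Mat b) (ρ : BMat a b) (i : Fin a) (j : Fin b)
    (p : Fin a × Fin b) :
    (((1 : Mat a) ⊗ₖ Q) * ρ) (i, j) p = ∑ k, Q j k * ρ (i, k) p := by
  simp [Matrix.mul_apply, Fintype.sum_prod_type, Matrix.one_apply, ite_mul, zero_mul,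
    Finset.sum_ite_eq]

lemma mul_one_kron_apply (Q : Mat b) (ρ : BMat a b) (i' : Fin a) (j' : Fin b)
    (p : Fin a × Fin b) :
    (ρ * ((1 : Mat a) ⊗ₖ Q)) p (i', j') = ∑ k, ρ p (i', k) * Q k j' := by
  simp [Matrix.mul_apply, Fintype.sum_prod_type, Matrix.one_apply, mul_ite, mul_zero, ite_mul,
    zero_mul, Finset.sum_ite_eq']

lemma kron_one_mul_apply (Q : Mat a) (ρ : BMat a b) (i : Fin a) (j : Fin b)
    (p : Fin a × Fin b) :
    ((Q ⊗ₖ (1 : Mat b)) * ρ) (i, j) p = ∑ k, Q i k * ρ (k, j) p := by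
  simp only [Matrix.mul_apply, Fintype.sum_prod_type, Matrix.kroneckerMap_apply,
    Matrix.one_apply, mul_ite, mul_one, mul_zero, ite_mul, zero_mul]
  rw [Finset.sum_comm]
  simp [Finset.sum_ite_eq]

lemma mul_kron_one_apply (Q : Mat a) (ρ : BMat a b) (i' : Fin a) (j' : Fin b)
    (p : Fin a × Fin b) :
    (ρ * (Q ⊗ₖ (1 : Mat b))) p (i', j') = ∑ k, ρ p (k, j') * Q k i' := by
  simp only [Matrix.mul_apply, Fintype.sum_prod_type, Matrix.kroneckerMap_apply,
    Matrix.one_apply, mul_ite, mul_one, mul_zero, ite_mul, zero_mul]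
  refine Finset.sum_congr rfl fun k _ => ?_
  simp [Finset.sum_ite_eq', mul_comm]

/-- The key formula for `Tr_B[(1 ⊗ P) ρ (1 ⊗ P)]` for a rank-one projector `P = |w⟩⟨w|`
with `w` a unit vector. -/
lemma ptraceB_sandwich (ρ : BMat a b) {w : Fin b → ℂ} (hw : ∑ i, star (w i) * w i = 1)
    (i i' : Fin a) :
    ptraceB (((1 : Mat a) ⊗ₖ projv w) * ρ * ((1 : Mat a) ⊗ₖ projv w)) i i' =
      ∑ j1, ∑ j2, star (w j1) * w j2 * ρ (i, j1) (i', j2) := by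
  have hP : projv w * projv w = projv w := projv_mul_self hw
  have hPa : ∀ k l, ∑ j, projv w k j * projv w j l = projv w k l := by
    intro k l
    have := congrFun (congrFun hP k) l
    simpa [Matrix.mul_apply] using this
  calc ptraceB (((1 : Mat a) ⊗ₖ projv w) * ρ * ((1 : Mat a) ⊗ₖ projv w)) i i'
      = ∑ j, ∑ k, (((1 : Mat a) ⊗ₖ projv w) * ρ) (i, j) (i', k) * projv w k j := by
        refine Finset.sum_congr rfl fun j _ => ?_
        exact mul_one_kron_apply (projv w) _ i' j (i, j)
    _ = ∑ j, ∑ k, ∑ l, projv w j l * ρ (i, l) (i', k) * projv w k j := by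
        refine Finset.sum_congr rfl fun j _ => Finset.sum_congr rfl fun k _ => ?_
        rw [one_kron_mul_apply, Finset.sum_mul]
    _ = ∑ j, ∑ l, ∑ k, projv w j l * ρ (i, l) (i', k) * projv w k j :=
        Finset.sum_congr rfl fun j _ => Finset.sum_comm
    _ = ∑ l, ∑ j, ∑ k, projv w j l * ρ (i, l) (i', k) * projv w k j := Finset.sum_comm
    _ = ∑ l, ∑ k, ∑ j, projv w j l * ρ (i, l) (i', k) * projv w k j :=
        Finset.sum_congr rfl fun l _ => Finset.sum_comm
    _ = ∑ l, ∑ k, ρ (i, l) (i', k) * projv w k l := by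
        refine Finset.sum_congr rfl fun l _ => Finset.sum_congr rfl fun k _ => ?_
        calc ∑ j, projv w j l * ρ (i, l) (i', k) * projv w k j
            = ρ (i, l) (i', k) * ∑ j, projv w k j * projv w j l := by
              rw [Finset.mul_sum]
              exact Finset.sum_congr rfl fun j _ => by ring
          _ = ρ (i, l) (i', k) * projv w k l := by rw [hPa]
    _ = ∑ j1, ∑ j2, star (w j1) * w j2 * ρ (i, j1) (i', j2) := by
        refine Finset.sum_congr rfl fun j1 _ => Finset.sum_congr rfl fun j2 _ => ?_
        simp only [projv]
        ring

lemma sandwichA_apply (Q : Mat a) (ρ : BMat a b) (i i' : Fin a) (j j' : Fin b) :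
    ((Q ⊗ₖ (1 : Mat b)) * ρ * (Q ⊗ₖ (1 : Mat b))) (i, j) (i', j') =
      ∑ k, ∑ k', Q i k * ρ (k, j) (k', j') * Q k' i' := by
  rw [Matrix.mul_assoc]
  rw [kron_one_mul_apply]
  refine Finset.sum_congr rfl fun k _ => ?_
  rw [mul_kron_one_apply, Finset.mul_sum]
  refine Finset.sum_congr rfl fun k' _ => by ring

lemma meas_projv_apply {n : ℕ} {u : Fin n → Fin n → ℂ} (hu : IsRankOneMeas u) (j1 j2 : Fin n) :
    ∑ z, u z j1 * star (u z j2) = if j1 = j2 then 1 else 0 := by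
  have h := meas_sum_projv hu
  have h2 := congrFun (congrFun h j1) j2
  simpa [Matrix.sum_apply, projv, Matrix.one_apply] using h2

lemma meas_dual {n : ℕ} {u : Fin n → Fin n → ℂ} (hu : IsRankOneMeas u) (j1 j2 : Fin n) :
    ∑ z, star (u z j1) * u z j2 = if j1 = j2 then 1 else 0 := by
  have h := meas_projv_apply hu j1 j2
  calc ∑ z, star (u z j1) * u z j2 = star (∑ z, u z j1 * star (u z j2)) := by
        rw [star_sum]
        exact Finset.sum_congr rfl fun z _ => by simp only [star_mul', star_star]
    _ = if j1 = j2 then 1 else 0 := by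
        rw [h]; by_cases hj : j1 = j2 <;> simp [hj]

end Kron
section States

variable {d b : ℕ}

lemma psd_trace_re {ι : Type} [Fintype ι] [DecidableEq ι] {X : Matrix ι ι ℂ}
    (hX : X.PosSemidef) :
    X.trace = ((X.trace.re : ℝ) : ℂ) ∧ 0 ≤ X.trace.re := by
  have h2 : (∑ i, ((hX.1.eigenvalues i : ℝ) : ℂ)) = (((∑ i, hX.1.eigenvalues i : ℝ)) : ℂ) := by
    push_cast; rfl
  have h3 : X.trace = (((∑ i, hX.1.eigenvalues i : ℝ)) : ℂ) := by
    rw [trace_eq_sum_eigenvalues hX.1, h2]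
  have h4 : X.trace.re = ∑ i, hX.1.eigenvalues i := by rw [h3, Complex.ofReal_re]
  constructor
  · rw [h4]; exact h3
  · rw [h4]; exact Finset.sum_nonneg fun i _ => hX.eigenvalues_nonneg i

lemma posSemidef_sum {ι κ : Type} [Fintype ι] [DecidableEq ι] [Fintype κ] [DecidableEq κ]
    {f : ι → Matrix κ κ ℂ} (h : ∀ i, (f i).PosSemidef) :
    (∑ i, f i).PosSemidef :=
  Finset.sum_induction f _ (fun _ _ ha hb => ha.add hb) Matrix.PosSemidef.zero
    (fun i _ => h i)

lemma ptraceB_sum {ι : Type} [Fintype ι] (f : ι → BMat d b) :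
    ptraceB (∑ l, f l) = ∑ l, ptraceB (f l) := by
  ext i i'
  simp only [ptraceB, Matrix.sum_apply]
  exact Finset.sum_comm

/-- `maxEnt` is a density matrix. -/
lemma maxEnt_density (hd : 0 < d) : IsDensity (maxEnt d) := by
  have hd' : (d : ℂ) ≠ 0 := Nat.cast_ne_zero.mpr hd.ne'
  refine ⟨Matrix.PosSemidef.of_dotProduct_mulVec_nonneg ?_ ?_, ?_⟩
  · ext p q
    by_cases h1 : p.1 = p.2 <;> by_cases h2 : q.1 = q.2 <;>
      simp [maxEnt, Matrix.conjTranspose_apply, h1, h2]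
  · intro x
    have h1 : maxEnt d *ᵥ x = fun p => if p.1 = p.2 then (d:ℂ)⁻¹ * ∑ k, x (k, k) else 0 := by
      funext p
      simp only [Matrix.mulVec, dotProduct, maxEnt, Fintype.sum_prod_type]
      by_cases hp : p.1 = p.2 <;>
        simp [hp, ite_and, ite_mul, zero_mul, Finset.sum_ite_eq, Finset.mul_sum]
    rw [h1]
    have h2 : dotProduct (star x)
          (fun p : Fin d × Fin d => if p.1 = p.2 then (d:ℂ)⁻¹ * ∑ k, x (k, k) else 0)
        = ((d:ℝ)⁻¹ : ℂ) * (star (∑ k, x (k, k)) * (∑ k, x (k, k))) := by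
      simp only [dotProduct, Pi.star_apply, Fintype.sum_prod_type, mul_ite, mul_zero]
      simp only [Finset.sum_ite_eq, Finset.mem_univ, if_true]
      calc ∑ i, star (x (i, i)) * ((d:ℂ)⁻¹ * ∑ k, x (k, k))
          = ∑ i, ((d:ℝ)⁻¹ : ℂ) * (star (x (i, i)) * ∑ k, x (k, k)) :=
            Finset.sum_congr rfl fun i _ => by push_cast; ring
        _ = ((d:ℝ)⁻¹ : ℂ) * ∑ i, (star (x (i, i)) * ∑ k, x (k, k)) := by
            rw [Finset.mul_sum]
        _ = ((d:ℝ)⁻¹ : ℂ) * ((∑ i, star (x (i, i))) * ∑ k, x (k, k)) := by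
            rw [Finset.sum_mul]
        _ = ((d:ℝ)⁻¹ : ℂ) * (star (∑ k, x (k, k)) * ∑ k, x (k, k)) := by rw [star_sum]
    rw [h2]
    have h3 : (0:ℂ) ≤ ((d:ℝ)⁻¹ : ℂ) := by
      have h4 : ((d:ℝ)⁻¹ : ℂ) = Complex.ofReal ((d:ℝ)⁻¹) := by push_cast; ring
      rw [h4]
      exact Complex.zero_le_real.mpr (by positivity)
    exact mul_nonneg h3 (star_mul_self_nonneg _)
  · simp only [Matrix.trace, Matrix.diag, maxEnt, Fintype.sum_prod_type]
    have h1 : ∀ i : Fin d, (∑ j, if i = j ∧ i = j then (d:ℂ)⁻¹ else 0) = (d:ℂ)⁻¹ := by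
      intro i
      simp [and_self, Finset.sum_ite_eq]
    rw [Finset.sum_congr rfl fun i _ => h1 i]
    simp [Finset.sum_const, hd']

lemma sum_kron_one (f : Fin d → Mat d) :
    (∑ j, (f j ⊗ₖ (1 : Mat b))) = (∑ j, f j) ⊗ₖ (1 : Mat b) := by
  ext p q
  simp [Matrix.sum_apply, Finset.sum_mul]

lemma one_kron_sum (f : Fin b → Mat b) :
    (∑ j, ((1 : Mat d) ⊗ₖ f j)) = (1 : Mat d) ⊗ₖ (∑ j, f j) := by
  ext p q
  simp [Matrix.sum_apply, Finset.mul_sum]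

lemma trace_sandwichB_sum (ρ : BMat d d) {u : Fin d → Fin d → ℂ} (hu : IsRankOneMeas u) :
    ∑ z, (((1 : Mat d) ⊗ₖ projv (u z)) * ρ * ((1 : Mat d) ⊗ₖ projv (u z))).trace = ρ.trace := by
  have key : ∀ z, (((1 : Mat d) ⊗ₖ projv (u z)) * ρ * ((1 : Mat d) ⊗ₖ projv (u z))).trace
      = (((1 : Mat d) ⊗ₖ projv (u z)) * ρ).trace := by
    intro z
    rw [Matrix.trace_mul_cycle]
    rw [show ((1 : Mat d) ⊗ₖ projv (u z)) * ((1 : Mat d) ⊗ₖ projv (u z))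
        = ((1 : Mat d) ⊗ₖ projv (u z)) from by
      rw [← Matrix.mul_kronecker_mul, Matrix.one_mul, projv_mul_self (meas_unit hu z)]]
  simp only [key]
  rw [← Matrix.trace_sum, ← Finset.sum_mul, one_kron_sum, meas_sum_projv hu,
    Matrix.one_kronecker_one, Matrix.one_mul]

lemma trace_pinch (ρ : BMat d b) {v : Fin d → Fin d → ℂ} (hv : IsRankOneMeas v) :
    (∑ j, (projv (v j) ⊗ₖ (1 : Mat b)) * ρ * (projv (v j) ⊗ₖ (1 : Mat b))).trace = ρ.trace := by
  have key : ∀ j, ((projv (v j) ⊗ₖ (1 : Mat b)) * ρ * (projv (v j) ⊗ₖ (1 : Mat b))).trace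
      = ((projv (v j) ⊗ₖ (1 : Mat b)) * ρ).trace := by
    intro j
    rw [Matrix.trace_mul_cycle]
    rw [show (projv (v j) ⊗ₖ (1 : Mat b)) * (projv (v j) ⊗ₖ (1 : Mat b))
        = (projv (v j) ⊗ₖ (1 : Mat b)) from by
      rw [← Matrix.mul_kronecker_mul, Matrix.one_mul, projv_mul_self (meas_unit hv j)]]
  rw [Matrix.trace_sum]
  simp only [key]
  rw [← Matrix.trace_sum, ← Finset.sum_mul, sum_kron_one, meas_sum_projv hv,
    Matrix.one_kronecker_one, Matrix.one_mul]

lemma pinch_density {v : Fin d → Fin d → ℂ} (hv : IsRankOneMeas v) {ρ : BMat d b}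
    (hρ : IsDensity ρ) :
    IsDensity (∑ j, (projv (v j) ⊗ₖ (1 : Mat b)) * ρ * (projv (v j) ⊗ₖ (1 : Mat b))) := by
  constructor
  · exact posSemidef_sum fun j => sandwich_psd' hρ.1 (kron_one_herm (v j))
  · rw [trace_pinch ρ hv]; exact hρ.2

lemma star_unit {n : ℕ} {w : Fin n → ℂ} (hw : ∑ i, star (w i) * w i = 1) :
    ∑ i, star (star (w i)) * star (w i) = 1 := by
  have h : ∑ i, star (star (w i)) * star (w i) = star (∑ i, star (w i) * w i) := by
    rw [star_sum]
    exact Finset.sum_congr rfl fun i _ => by simp only [star_mul', star_star]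
  rw [h, hw, star_one]

lemma trace_projv {n : ℕ} {w : Fin n → ℂ} (hw : ∑ i, star (w i) * w i = 1) :
    (projv w).trace = 1 := by
  have h : ∑ i, w i * star (w i) = 1 := by
    rw [← hw]; exact Finset.sum_congr rfl fun i _ => mul_comm _ _
  simpa [Matrix.trace, Matrix.diag, projv] using h

lemma smul_projv_posSemidef {n : ℕ} (w : Fin n → ℂ) {c : ℝ} (hc : 0 ≤ c) :
    (((c : ℝ) : ℂ) • projv w).PosSemidef := by
  refine Matrix.PosSemidef.of_dotProduct_mulVec_nonneg ?_ ?_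
  · show (((c : ℝ) : ℂ) • projv w)ᴴ = ((c : ℝ) : ℂ) • projv w
    rw [Matrix.conjTranspose_smul, projv_conjTranspose]
    congr 1
    simp [Complex.star_def, Complex.conj_ofReal]
  · intro x
    rw [Matrix.smul_mulVec, dotProduct_smul, smul_eq_mul]
    exact mul_nonneg (Complex.zero_le_real.mpr hc) ((projv_posSemidef w).dotProduct_mulVec_nonneg x)

lemma kyFan_smul_projv {n : ℕ} {w : Fin n → ℂ} (hw : ∑ i, star (w i) * w i = 1)
    {c : ℝ} (hc : 0 < c) {k : ℕ} (hk : 1 ≤ k) :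
    kyFan k (((c : ℝ) : ℂ) • projv w) = c := by
  have hP := projv_mul_self hw
  have htrp := trace_projv hw
  have htr : (((c : ℝ) : ℂ) • projv w).trace = ((c : ℝ) : ℂ) := by
    rw [Matrix.trace_smul, htrp, smul_eq_mul, mul_one]
  have htr2 : ((((c : ℝ) : ℂ) • projv w) * (((c : ℝ) : ℂ) • projv w)).trace
      = ((c ^ 2 : ℝ) : ℂ) := by
    rw [Matrix.smul_mul, Matrix.mul_smul, hP, smul_smul, Matrix.trace_smul, htrp, smul_eq_mul,
      mul_one]
    push_cast; ring
  exact kyFan_rank_one (smul_projv_posSemidef w hc.le) hc htr htr2 hk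

/-- partial trace of the measured maximally entangled state -/
lemma X_maxEnt (hd : 0 < d) {u : Fin d → ℂ} (hu : ∑ i, star (u i) * u i = 1) :
    ptraceB (((1 : Mat d) ⊗ₖ projv u) * maxEnt d * ((1 : Mat d) ⊗ₖ projv u))
      = (((d : ℝ)⁻¹ : ℝ) : ℂ) • projv (fun i => star (u i)) := by
  ext i i'
  rw [ptraceB_sandwich _ hu i i']
  simp only [maxEnt, mul_ite, mul_zero, ite_and]
  have hcol : ∀ x : Fin d, (∑ x1, if i = x then if i' = x1
      then star (u x) * u x1 * (d:ℂ)⁻¹ else 0 else 0)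
      = if i = x then star (u x) * u i' * (d:ℂ)⁻¹ else 0 := by
    intro x
    by_cases h : i = x <;> simp [h, Finset.sum_ite_eq]
  rw [Finset.sum_congr rfl fun x _ => hcol x]
  simp only [Finset.sum_ite_eq, Finset.mem_univ, if_true, Matrix.smul_apply, projv, star_star,
    smul_eq_mul]
  push_cast
  ring

/-- partial trace of the measured product state -/
lemma X_kron {w : Fin b → ℂ} (hw : ∑ i, star (w i) * w i = 1) (A : Mat d) (B : Mat b) :
    ptraceB (((1 : Mat d) ⊗ₖ projv w) * (A ⊗ₖ B) * ((1 : Mat d) ⊗ₖ projv w))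
      = (∑ j1, ∑ j2, star (w j1) * B j1 j2 * w j2) • A := by
  ext i i'
  rw [ptraceB_sandwich _ hw i i']
  simp only [Matrix.smul_apply, Matrix.kroneckerMap_apply, smul_eq_mul]
  rw [Finset.sum_mul]
  refine Finset.sum_congr rfl fun j1 _ => ?_
  rw [Finset.sum_mul]
  refine Finset.sum_congr rfl fun j2 _ => by ring

/-- partial trace of the pinched then measured maximally entangled state -/
lemma X_pinch_maxEnt {v : Fin d → Fin d → ℂ} (hv : IsRankOneMeas v) (hd : 0 < d) (z : Fin d) :
    ptraceB (((1 : Mat d) ⊗ₖ projv (fun i => star (v z i)))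
        * (∑ j, (projv (v j) ⊗ₖ (1 : Mat d)) * maxEnt d * (projv (v j) ⊗ₖ (1 : Mat d)))
        * ((1 : Mat d) ⊗ₖ projv (fun i => star (v z i))))
      = (((d : ℝ)⁻¹ : ℝ) : ℂ) • projv (v z) := by
  have hw : ∑ i, star (star (v z i)) * star (v z i) = 1 := star_unit (meas_unit hv z)
  have hdist : ((1 : Mat d) ⊗ₖ projv (fun i => star (v z i)))
        * (∑ j, (projv (v j) ⊗ₖ (1 : Mat d)) * maxEnt d * (projv (v j) ⊗ₖ (1 : Mat d)))
        * ((1 : Mat d) ⊗ₖ projv (fun i => star (v z i)))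
      = ∑ j, ((1 : Mat d) ⊗ₖ projv (fun i => star (v z i)))
          * ((projv (v j) ⊗ₖ (1 : Mat d)) * maxEnt d * (projv (v j) ⊗ₖ (1 : Mat d)))
          * ((1 : Mat d) ⊗ₖ projv (fun i => star (v z i))) := by
    rw [Finset.mul_sum, Finset.sum_mul]
  rw [hdist, ptraceB_sum]
  have hterm : ∀ j : Fin d, ptraceB (((1 : Mat d) ⊗ₖ projv (fun i => star (v z i)))
        * ((projv (v j) ⊗ₖ (1 : Mat d)) * maxEnt d * (projv (v j) ⊗ₖ (1 : Mat d)))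
        * ((1 : Mat d) ⊗ₖ projv (fun i => star (v z i))))
      = fun i i' => (if j = z then 1 else 0) * ((d:ℂ)⁻¹ * (v j i * star (v j i'))) := by
    intro j
    funext i i'
    rw [ptraceB_sandwich _ hw i i']
    have hmid : ∀ (j1 j2 : Fin d),
        ((projv (v j) ⊗ₖ (1 : Mat d)) * maxEnt d * (projv (v j) ⊗ₖ (1 : Mat d))) (i, j1) (i', j2)
        = projv (v j) i j1 * (d:ℂ)⁻¹ * projv (v j) j2 i' := by
      intro j1 j2
      rw [sandwichA_apply]
      simp [maxEnt, ite_and, mul_ite, mul_zero, ite_mul, zero_mul, Finset.sum_ite_eq,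
        Finset.sum_ite_eq']
    rw [show (∑ j1, ∑ j2, star (star (v z j1)) * star (v z j2) *
          ((projv (v j) ⊗ₖ (1 : Mat d)) * maxEnt d * (projv (v j) ⊗ₖ (1 : Mat d))) (i, j1) (i', j2))
        = ∑ j1, ∑ j2, (d:ℂ)⁻¹ * ((v z j1 * projv (v j) i j1) * (star (v z j2) * projv (v j) j2 i'))
        from Finset.sum_congr rfl fun j1 _ => Finset.sum_congr rfl fun j2 _ => by
          rw [hmid j1 j2]; simp only [star_star]; ring]
    have hsep : ∑ j1, ∑ j2, (d:ℂ)⁻¹ *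
          ((v z j1 * projv (v j) i j1) * (star (v z j2) * projv (v j) j2 i'))
        = (d:ℂ)⁻¹ * ((∑ j1, v z j1 * projv (v j) i j1) * (∑ j2, star (v z j2) * projv (v j) j2 i')) := by
      rw [Finset.sum_mul_sum, Finset.mul_sum]
      refine Finset.sum_congr rfl fun j1 _ => ?_
      rw [Finset.mul_sum]
    rw [hsep]
    have hA : ∑ j1, v z j1 * projv (v j) i j1 = (if j = z then 1 else 0) * v j i := by
      simp only [projv]
      calc ∑ j1, v z j1 * (v j i * star (v j j1))
          = v j i * ∑ j1, star (v j j1) * v z j1 := by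
            rw [Finset.mul_sum]; exact Finset.sum_congr rfl fun j1 _ => by ring
        _ = (if j = z then 1 else 0) * v j i := by rw [hv j z]; ring
    have hB : ∑ j2, star (v z j2) * projv (v j) j2 i' = (if z = j then 1 else 0) * star (v j i') := by
      simp only [projv]
      calc ∑ j2, star (v z j2) * (v j j2 * star (v j i'))
          = star (v j i') * ∑ j2, star (v z j2) * v j j2 := by
            rw [Finset.mul_sum]; exact Finset.sum_congr rfl fun j2 _ => by ring
        _ = (if z = j then 1 else 0) * star (v j i') := by rw [hv z j]; ring
    rw [hA, hB]
    by_cases hj : j = z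
    · subst hj
      simp
    · simp [hj, Ne.symm hj]
  rw [Finset.sum_congr rfl fun j _ => hterm j]
  ext i i'
  erw [Matrix.sum_apply]
  simp only [Matrix.sum_apply, Finset.sum_apply, ite_mul, one_mul, zero_mul, Finset.sum_ite_eq',
    Finset.mem_univ, if_true, Matrix.smul_apply, projv, smul_eq_mul]
  push_cast
  ring

end States
section Game

variable {d c : ℕ}

/-- the value of a fixed strategy in the game `R0` -/
def gval (T : Matrix (Fin d) (Fin c) ℝ) (ρ : BMat d d) (u : Fin d → Fin d → ℂ)
    (f : Fin d → Fin c) : ℝ :=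
  ∑ z, ∑ w, T w (f z) *
      kyFan (w.1 + 1)
        (ptraceB (((1 : Mat d) ⊗ₖ projv (u z)) * ρ * ((1 : Mat d) ⊗ₖ projv (u z))))

lemma R0_eq (T : Matrix (Fin d) (Fin c) ℝ) (ρ : BMat d d) :
    R0 T ρ = ⨆ u : {u : Fin d → Fin d → ℂ // IsRankOneMeas u}, ⨆ f : Fin d → Fin c,
      gval T ρ u.1 f := rfl

lemma gval_nonneg {T : Matrix (Fin d) (Fin c) ℝ} (hT : ∀ w z, 0 ≤ T w z)
    (ρ : BMat d d) (u : Fin d → Fin d → ℂ) (f : Fin d → Fin c) : 0 ≤ gval T ρ u f :=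
  Finset.sum_nonneg fun z _ => Finset.sum_nonneg fun w _ =>
    mul_nonneg (hT w (f z)) (kyFan_nonneg _ _)

lemma gval_le_one {T : Matrix (Fin d) (Fin c) ℝ} (hT : ColStochastic T)
    {ρ : BMat d d} (hρ : IsDensity ρ) {u : Fin d → Fin d → ℂ} (hu : IsRankOneMeas u)
    (f : Fin d → Fin c) : gval T ρ u f ≤ 1 := by
  set X : Fin d → Mat d := fun z =>
    ptraceB (((1 : Mat d) ⊗ₖ projv (u z)) * ρ * ((1 : Mat d) ⊗ₖ projv (u z))) with hX
  have hXpsd : ∀ z, (X z).PosSemidef := fun z =>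
    ptraceB_posSemidef (sandwich_psd' hρ.1 (one_kron_herm (u z)))
  set t : Fin d → ℝ := fun z => (X z).trace.re with ht
  have htz : ∀ z, (X z).trace = ((t z : ℝ) : ℂ) := fun z => (psd_trace_re (hXpsd z)).1
  have hsumt : ∑ z, t z = 1 := by
    have h1 : ∑ z, (X z).trace = 1 := by
      have h2 : ∀ z, (X z).trace
          = (((1 : Mat d) ⊗ₖ projv (u z)) * ρ * ((1 : Mat d) ⊗ₖ projv (u z))).trace :=
        fun z => trace_ptraceB _
      rw [Finset.sum_congr rfl fun z _ => h2 z, trace_sandwichB_sum ρ hu, hρ.2]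
    have h3 : ((∑ z, t z : ℝ) : ℂ) = ((1 : ℝ) : ℂ) := by
      push_cast
      rw [← h1]
      exact Finset.sum_congr rfl fun z _ => (htz z).symm
    exact_mod_cast h3
  calc gval T ρ u f ≤ ∑ z, ∑ w, T w (f z) * t z := by
        refine Finset.sum_le_sum fun z _ => Finset.sum_le_sum fun w _ => ?_
        exact mul_le_mul_of_nonneg_left (kyFan_le_of_trace (hXpsd z) (htz z) _) (hT.1 w (f z))
    _ = ∑ z, t z := by
        refine Finset.sum_congr rfl fun z _ => ?_
        rw [← Finset.sum_mul, hT.2 (f z), one_mul]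
    _ = 1 := hsumt

lemma R0_le_one {T : Matrix (Fin d) (Fin c) ℝ} (hT : ColStochastic T)
    {ρ : BMat d d} (hρ : IsDensity ρ) : R0 T ρ ≤ 1 := by
  rw [R0_eq]
  exact Real.iSup_le
    (fun u => Real.iSup_le (fun f => gval_le_one hT hρ u.2 f) zero_le_one) zero_le_one

lemma R0_nonneg {T : Matrix (Fin d) (Fin c) ℝ} (hT : ∀ w z, 0 ≤ T w z) (ρ : BMat d d) :
    0 ≤ R0 T ρ := by
  rw [R0_eq]
  exact Real.iSup_nonneg fun u => Real.iSup_nonneg fun f => gval_nonneg hT ρ u.1 f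

lemma le_R0 {T : Matrix (Fin d) (Fin c) ℝ} (hT : ColStochastic T)
    {ρ : BMat d d} (hρ : IsDensity ρ) {u₀ : Fin d → Fin d → ℂ} (hu₀ : IsRankOneMeas u₀)
    (f₀ : Fin d → Fin c) : gval T ρ u₀ f₀ ≤ R0 T ρ := by
  rw [R0_eq]
  have hinner : ∀ u : {u : Fin d → Fin d → ℂ // IsRankOneMeas u},
      BddAbove (Set.range (gval T ρ u.1)) := fun u =>
    ⟨1, by rintro x ⟨f, rfl⟩; exact gval_le_one hT hρ u.2 f⟩
  have houter : BddAbove (Set.range fun u : {u : Fin d → Fin d → ℂ // IsRankOneMeas u} =>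
      ⨆ f : Fin d → Fin c, gval T ρ u.1 f) :=
    ⟨1, by rintro x ⟨u, rfl⟩; exact Real.iSup_le (fun f => gval_le_one hT hρ u.2 f) zero_le_one⟩
  calc gval T ρ u₀ f₀ ≤ ⨆ f : Fin d → Fin c, gval T ρ u₀ f :=
        le_ciSup (hinner ⟨u₀, hu₀⟩) f₀
    _ ≤ ⨆ u : {u : Fin d → Fin d → ℂ // IsRankOneMeas u}, ⨆ f : Fin d → Fin c, gval T ρ u.1 f :=
        le_ciSup houter ⟨u₀, hu₀⟩

lemma gval_maxEnt {T : Matrix (Fin d) (Fin c) ℝ} (hd : 0 < d) (hT : ColStochastic T)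
    {u : Fin d → Fin d → ℂ} (hu : IsRankOneMeas u) (f : Fin d → Fin c) :
    gval T (maxEnt d) u f = 1 := by
  have hkf : ∀ (z : Fin d) (w : Fin d), kyFan (w.1 + 1)
      (ptraceB (((1 : Mat d) ⊗ₖ projv (u z)) * maxEnt d * ((1 : Mat d) ⊗ₖ projv (u z))))
      = (d : ℝ)⁻¹ := by
    intro z w
    rw [X_maxEnt hd (meas_unit hu z)]
    exact kyFan_smul_projv (star_unit (meas_unit hu z)) (by positivity) (Nat.le_add_left 1 _)
  unfold gval
  rw [Finset.sum_congr rfl fun z _ => Finset.sum_congr rfl fun w _ => by rw [hkf z w]]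
  have hz : ∀ z : Fin d, ∑ w, T w (f z) * (d : ℝ)⁻¹ = (d : ℝ)⁻¹ := by
    intro z
    rw [← Finset.sum_mul, hT.2 (f z), one_mul]
  rw [Finset.sum_congr rfl fun z _ => hz z]
  simp [Finset.sum_const]
  field_simp

lemma R0_maxEnt (hd : 0 < d) (hc : 0 < c) {T : Matrix (Fin d) (Fin c) ℝ}
    (hT : ColStochastic T) : R0 T (maxEnt d) = 1 := by
  apply le_antisymm (R0_le_one hT (maxEnt_density hd))
  have h := le_R0 hT (maxEnt_density hd) (stdMeas d) (fun _ => ⟨0, hc⟩)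
  rwa [gval_maxEnt hd hT (stdMeas d) _] at h

lemma gval_pinch_maxEnt {T : Matrix (Fin d) (Fin c) ℝ} (hd : 0 < d) (hT : ColStochastic T)
    {v : Fin d → Fin d → ℂ} (hv : IsRankOneMeas v) (f : Fin d → Fin c) :
    gval T (∑ j, (projv (v j) ⊗ₖ (1 : Mat d)) * maxEnt d * (projv (v j) ⊗ₖ (1 : Mat d)))
      (fun z i => star (v z i)) f = 1 := by
  have hkf : ∀ (z : Fin d) (w : Fin d), kyFan (w.1 + 1)
      (ptraceB (((1 : Mat d) ⊗ₖ projv (fun i => star (v z i)))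
        * (∑ j, (projv (v j) ⊗ₖ (1 : Mat d)) * maxEnt d * (projv (v j) ⊗ₖ (1 : Mat d)))
        * ((1 : Mat d) ⊗ₖ projv (fun i => star (v z i)))))
      = (d : ℝ)⁻¹ := by
    intro z w
    rw [X_pinch_maxEnt hv hd z]
    exact kyFan_smul_projv (meas_unit hv z) (by positivity) (Nat.le_add_left 1 _)
  unfold gval
  rw [Finset.sum_congr rfl fun z _ => Finset.sum_congr rfl fun w _ => by rw [hkf z w]]
  have hz : ∀ z : Fin d, ∑ w, T w (f z) * (d : ℝ)⁻¹ = (d : ℝ)⁻¹ := by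
    intro z
    rw [← Finset.sum_mul, hT.2 (f z), one_mul]
  rw [Finset.sum_congr rfl fun z _ => hz z]
  simp [Finset.sum_const]
  field_simp

lemma R0_pinch_maxEnt (hd : 0 < d) (hc : 0 < c) {T : Matrix (Fin d) (Fin c) ℝ}
    (hT : ColStochastic T) {v : Fin d → Fin d → ℂ} (hv : IsRankOneMeas v) :
    R0 T (∑ j, (projv (v j) ⊗ₖ (1 : Mat d)) * maxEnt d * (projv (v j) ⊗ₖ (1 : Mat d))) = 1 := by
  have hdens := pinch_density hv (maxEnt_density hd)
  apply le_antisymm (R0_le_one hT hdens)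
  have h := le_R0 hT hdens (star_meas hv) (fun _ => ⟨0, hc⟩)
  rwa [gval_pinch_maxEnt hd hT hv _] at h

lemma Rgame_eq (T : Matrix (Fin d) (Fin c) ℝ) (p : ℝ) (ρ : BMat d d) :
    Rgame T p ρ = p * (⨅ v : {v : Fin d → Fin d → ℂ // IsRankOneMeas v},
        R0 T (∑ j, (projv (v.1 j) ⊗ₖ (1 : Mat d)) * ρ * (projv (v.1 j) ⊗ₖ (1 : Mat d)))) +
      (1 - p) * R0 T ρ := rfl

lemma Rgame_maxEnt (hd : 0 < d) (hc : 0 < c) {T : Matrix (Fin d) (Fin c) ℝ}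
    (hT : ColStochastic T) (p : ℝ) : Rgame T p (maxEnt d) = 1 := by
  rw [Rgame_eq]
  have h1 : (⨅ v : {v : Fin d → Fin d → ℂ // IsRankOneMeas v},
      R0 T (∑ j, (projv (v.1 j) ⊗ₖ (1 : Mat d)) * maxEnt d * (projv (v.1 j) ⊗ₖ (1 : Mat d))))
      = 1 := by
    have : Nonempty {v : Fin d → Fin d → ℂ // IsRankOneMeas v} :=
      ⟨⟨_, stdMeas d⟩⟩
    rw [iInf_congr fun v => R0_pinch_maxEnt hd hc hT v.2]
    exact ciInf_const
  rw [h1, R0_maxEnt hd hc hT]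
  ring

lemma Rgame_le_one (hd : 0 < d) {T : Matrix (Fin d) (Fin c) ℝ}
    (hT : ColStochastic T) {ρ : BMat d d} (hρ : IsDensity ρ) {p : ℝ} (hp0 : 0 ≤ p)
    (hp1 : p ≤ 1) : Rgame T p ρ ≤ 1 := by
  rw [Rgame_eq]
  have hbdd : BddBelow (Set.range fun v : {v : Fin d → Fin d → ℂ // IsRankOneMeas v} =>
      R0 T (∑ j, (projv (v.1 j) ⊗ₖ (1 : Mat d)) * ρ * (projv (v.1 j) ⊗ₖ (1 : Mat d)))) :=
    ⟨0, by rintro x ⟨v, rfl⟩; exact R0_nonneg hT.1 _⟩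
  have hinf : (⨅ v : {v : Fin d → Fin d → ℂ // IsRankOneMeas v},
      R0 T (∑ j, (projv (v.1 j) ⊗ₖ (1 : Mat d)) * ρ * (projv (v.1 j) ⊗ₖ (1 : Mat d)))) ≤ 1 := by
    refine le_trans (ciInf_le hbdd ⟨_, stdMeas d⟩) ?_
    exact R0_le_one hT (pinch_density (stdMeas d) hρ)
  have hR0 : R0 T ρ ≤ 1 := R0_le_one hT hρ
  calc p * _ + (1 - p) * R0 T ρ ≤ p * 1 + (1 - p) * 1 :=
        add_le_add (mul_le_mul_of_nonneg_left hinf hp0)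
          (mul_le_mul_of_nonneg_left hR0 (by linarith))
    _ = 1 := by ring

end Game
section Part2

variable {d c : ℕ}

lemma quad_eq {n : ℕ} (B : Mat n) (w : Fin n → ℂ) :
    dotProduct (star w) (B *ᵥ w) = ∑ j1, ∑ j2, star (w j1) * B j1 j2 * w j2 := by
  simp only [dotProduct, Matrix.mulVec, Pi.star_apply, Finset.mul_sum]
  exact Finset.sum_congr rfl fun j1 _ => Finset.sum_congr rfl fun j2 _ => by ring

lemma quad_nonneg {n : ℕ} {B : Mat n} (hB : B.PosSemidef) (w : Fin n → ℂ) :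
    0 ≤ ∑ j1, ∑ j2, star (w j1) * B j1 j2 * w j2 := by
  have h := hB.dotProduct_mulVec_nonneg w
  rwa [quad_eq] at h

lemma cnonneg_eq_re {q : ℂ} (h : 0 ≤ q) : q = ((q.re : ℝ) : ℂ) ∧ 0 ≤ q.re := by
  rw [Complex.le_def] at h
  refine ⟨?_, by simpa using h.1⟩
  apply Complex.ext
  · simp
  · simp [← h.2]

lemma sum_q {σB : Mat d} (htr : σB.trace = 1) {u : Fin d → Fin d → ℂ}
    (hu : IsRankOneMeas u) :
    ∑ z, (∑ j1, ∑ j2, star (u z j1) * σB j1 j2 * u z j2) = 1 := by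
  calc ∑ z, ∑ j1, ∑ j2, star (u z j1) * σB j1 j2 * u z j2
      = ∑ j1, ∑ z, ∑ j2, star (u z j1) * σB j1 j2 * u z j2 := Finset.sum_comm
    _ = ∑ j1, ∑ j2, ∑ z, star (u z j1) * σB j1 j2 * u z j2 :=
        Finset.sum_congr rfl fun j1 _ => Finset.sum_comm
    _ = ∑ j1, ∑ j2, σB j1 j2 * ∑ z, star (u z j1) * u z j2 := by
        refine Finset.sum_congr rfl fun j1 _ => Finset.sum_congr rfl fun j2 _ => ?_
        rw [Finset.mul_sum]
        exact Finset.sum_congr rfl fun z _ => by ring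
    _ = ∑ j1, σB j1 j1 := by
        refine Finset.sum_congr rfl fun j1 _ => ?_
        have hm2 : ∀ j2 : Fin d, ∑ z, (starRingEnd ℂ) (u z j1) * u z j2
            = if j1 = j2 then 1 else 0 := fun j2 => meas_dual hu j1 j2
        simp [hm2, meas_dual hu, mul_ite, mul_one, mul_zero, Finset.sum_ite_eq]
    _ = 1 := by simpa [Matrix.trace, Matrix.diag] using htr

lemma smul_one_herm {n : ℕ} (α : ℝ) : (((α : ℝ) : ℂ) • (1 : Mat n)).IsHermitian := by
  show (((α : ℝ) : ℂ) • (1 : Mat n))ᴴ = ((α : ℝ) : ℂ) • (1 : Mat n)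
  rw [Matrix.conjTranspose_smul, Matrix.conjTranspose_one]
  congr 1
  simp [Complex.star_def, Complex.conj_ofReal]

lemma eig_smul_one {n : ℕ} (α : ℝ) (h : (((α : ℝ) : ℂ) • (1 : Mat n)).IsHermitian) (i : Fin n) :
    h.eigenvalues i = α := by
  have hm := h.mulVec_eigenvectorBasis i
  have h1 : (((α : ℝ) : ℂ) • (1 : Mat n)) *ᵥ ⇑(h.eigenvectorBasis i)
      = ((α : ℝ) : ℂ) • ⇑(h.eigenvectorBasis i) := by
    rw [Matrix.smul_mulVec, Matrix.one_mulVec]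
  rw [h1] at hm
  have hb : (h.eigenvectorBasis i) ≠ 0 := h.eigenvectorBasis.orthonormal.ne_zero i
  have hex : ∃ x, h.eigenvectorBasis i x ≠ 0 := by
    by_contra hno
    push_neg at hno
    apply hb
    ext x
    exact hno x
  obtain ⟨x, hx⟩ := hex
  have h2 := congrFun hm x
  simp only [Pi.smul_apply, smul_eq_mul, Complex.real_smul] at h2
  have h3 : ((α : ℝ) : ℂ) = ((h.eigenvalues i : ℝ) : ℂ) := mul_right_cancel₀ hx h2
  exact_mod_cast h3.symm

lemma kyFan_one_smul_one {n : ℕ} {α : ℝ} (hα : 0 ≤ α) :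
    kyFan 1 (((α : ℝ) : ℂ) • (1 : Mat n)) ≤ α := by
  have hH := smul_one_herm (n := n) α
  rw [kyFan, dif_pos hH]
  exact sumTopK_one_le hα fun i => le_of_eq (eig_smul_one α hH i)

lemma sum_kron {b : ℕ} (f : Fin d → Mat d) (B : Mat b) :
    ((∑ j, f j) ⊗ₖ B) = ∑ j, (f j ⊗ₖ B) := by
  ext p q
  simp [Matrix.sum_apply, Finset.sum_mul]

lemma projv_conj_scalar {n : ℕ} (v : Fin n → ℂ) (A : Mat n) :
    projv v * A * projv v = (∑ k, ∑ k', star (v k) * A k k' * v k') • projv v := by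
  ext i i'
  rw [Matrix.mul_apply]
  calc ∑ k', (projv v * A) i k' * projv v k' i'
      = ∑ k', ∑ k, (projv v i k * A k k') * projv v k' i' := by
        refine Finset.sum_congr rfl fun k' _ => ?_
        rw [Matrix.mul_apply, Finset.sum_mul]
    _ = ∑ k, ∑ k', (projv v i k * A k k') * projv v k' i' := Finset.sum_comm
    _ = ∑ k, ∑ k', (star (v k) * A k k' * v k') * (v i * star (v i')) := by
        refine Finset.sum_congr rfl fun k _ => Finset.sum_congr rfl fun k' _ => ?_
        simp only [projv]
        ring
    _ = (∑ k, ∑ k', star (v k) * A k k' * v k') * (v i * star (v i')) := by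
        rw [Finset.sum_mul]
        refine Finset.sum_congr rfl fun k _ => ?_
        rw [Finset.sum_mul]
    _ = ((∑ k, ∑ k', star (v k) * A k k' * v k') • projv v) i i' := by
        simp [projv, Matrix.smul_apply]

lemma pinch_kron {b : ℕ} {σA : Mat d} (σB : Mat b) {v : Fin d → Fin d → ℂ}
    (hv : IsRankOneMeas v)
    (hunb : ∀ j, (∑ k, ∑ k', star (v j k) * σA k k' * v j k') = (((d : ℝ)⁻¹ : ℝ) : ℂ)) :
    ∑ j, (projv (v j) ⊗ₖ (1 : Mat b)) * (σA ⊗ₖ σB) * (projv (v j) ⊗ₖ (1 : Mat b))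
      = ((((d : ℝ)⁻¹ : ℝ) : ℂ) • (1 : Mat d)) ⊗ₖ σB := by
  have hterm : ∀ j, (projv (v j) ⊗ₖ (1 : Mat b)) * (σA ⊗ₖ σB) * (projv (v j) ⊗ₖ (1 : Mat b))
      = ((((d : ℝ)⁻¹ : ℝ) : ℂ) • projv (v j)) ⊗ₖ σB := by
    intro j
    calc (projv (v j) ⊗ₖ (1 : Mat b)) * (σA ⊗ₖ σB) * (projv (v j) ⊗ₖ (1 : Mat b))
        = ((projv (v j) * σA) ⊗ₖ ((1 : Mat b) * σB)) * (projv (v j) ⊗ₖ (1 : Mat b)) := by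
          conv_lhs => rw [← Matrix.mul_kronecker_mul]
      _ = (projv (v j) * σA * projv (v j)) ⊗ₖ ((1 : Mat b) * σB * (1 : Mat b)) := by
          conv_lhs => rw [← Matrix.mul_kronecker_mul]
      _ = (projv (v j) * σA * projv (v j)) ⊗ₖ σB := by rw [Matrix.one_mul, Matrix.mul_one]
      _ = ((((d : ℝ)⁻¹ : ℝ) : ℂ) • projv (v j)) ⊗ₖ σB := by rw [projv_conj_scalar, hunb j]
  rw [Finset.sum_congr rfl fun j _ => hterm j]
  calc ∑ j, (((((d : ℝ)⁻¹ : ℝ) : ℂ) • projv (v j)) ⊗ₖ σB)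
      = ∑ j, ((((d : ℝ)⁻¹ : ℝ) : ℂ) • (projv (v j) ⊗ₖ σB)) :=
        Finset.sum_congr rfl fun j _ => Matrix.smul_kronecker _ _ _
    _ = (((d : ℝ)⁻¹ : ℝ) : ℂ) • ∑ j, (projv (v j) ⊗ₖ σB) := (Finset.smul_sum).symm
    _ = (((d : ℝ)⁻¹ : ℝ) : ℂ) • ((∑ j, projv (v j)) ⊗ₖ σB) := by rw [sum_kron]
    _ = (((d : ℝ)⁻¹ : ℝ) : ℂ) • ((1 : Mat d) ⊗ₖ σB) := by rw [meas_sum_projv hv]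
    _ = ((((d : ℝ)⁻¹ : ℝ) : ℂ) • (1 : Mat d)) ⊗ₖ σB := (Matrix.smul_kronecker _ _ _).symm

/-- The Fourier basis vectors. -/
noncomputable def FourierV (d : ℕ) : Fin d → Fin d → ℂ := fun j k =>
  (((Real.sqrt d)⁻¹ : ℝ) : ℂ) * Complex.exp (2 * Real.pi * Complex.I * (j.1 * k.1) / d)

lemma fourier_meas (hd : 0 < d) : IsRankOneMeas (FourierV d) := by
  intro j j'
  set m : ℤ := (j'.1 : ℤ) - (j.1 : ℤ) with hm
  set ζ : ℂ := Complex.exp (2 * Real.pi * Complex.I * (m : ℂ) / d) with hζ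
  have hdC : (d : ℂ) ≠ 0 := Nat.cast_ne_zero.mpr hd.ne'
  have hsq : (((Real.sqrt d)⁻¹ : ℝ) : ℂ) * (((Real.sqrt d)⁻¹ : ℝ) : ℂ)
      = (((d : ℝ)⁻¹ : ℝ) : ℂ) := by
    rw [← Complex.ofReal_mul]
    congr 1
    rw [← mul_inv]
    congr 1
    exact Real.mul_self_sqrt (by positivity)
  have hterm : ∀ i : Fin d, star (FourierV d j i) * FourierV d j' i
      = (((d : ℝ)⁻¹ : ℝ) : ℂ) * ζ ^ (i.1) := by
    intro i
    show star ((((Real.sqrt d)⁻¹ : ℝ) : ℂ) * Complex.exp (2 * Real.pi * Complex.I * (j.1 * i.1) / d))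
        * ((((Real.sqrt d)⁻¹ : ℝ) : ℂ) * Complex.exp (2 * Real.pi * Complex.I * (j'.1 * i.1) / d))
        = (((d : ℝ)⁻¹ : ℝ) : ℂ) * ζ ^ (i.1)
    rw [star_mul']
    have h1 : star ((((Real.sqrt d)⁻¹ : ℝ) : ℂ)) = (((Real.sqrt d)⁻¹ : ℝ) : ℂ) := by
      simp [Complex.star_def, Complex.conj_ofReal]
    have h2 : star (Complex.exp (2 * Real.pi * Complex.I * (j.1 * i.1) / d))
        = Complex.exp ((starRingEnd ℂ) (2 * Real.pi * Complex.I * (j.1 * i.1) / d)) := by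
      rw [Complex.star_def, ← Complex.exp_conj]
    rw [h1, h2]
    have harg : (starRingEnd ℂ) (2 * Real.pi * Complex.I * (j.1 * i.1) / d)
        + 2 * Real.pi * Complex.I * (j'.1 * i.1) / d
        = (i.1 : ℂ) * (2 * Real.pi * Complex.I * (m : ℂ) / d) := by
      simp only [map_div₀, _root_.map_mul, Complex.conj_I, Complex.conj_ofReal,
        _root_.map_natCast, _root_.map_ofNat]
      rw [hm]
      push_cast
      ring
    calc (((Real.sqrt d)⁻¹ : ℝ) : ℂ) * Complex.exp ((starRingEnd ℂ) (2 * Real.pi * Complex.I * (j.1 * i.1) / d))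
          * ((((Real.sqrt d)⁻¹ : ℝ) : ℂ) * Complex.exp (2 * Real.pi * Complex.I * (j'.1 * i.1) / d))
        = ((((Real.sqrt d)⁻¹ : ℝ) : ℂ) * (((Real.sqrt d)⁻¹ : ℝ) : ℂ))
          * (Complex.exp ((starRingEnd ℂ) (2 * Real.pi * Complex.I * (j.1 * i.1) / d))
            * Complex.exp (2 * Real.pi * Complex.I * (j'.1 * i.1) / d)) := by ring
      _ = (((d : ℝ)⁻¹ : ℝ) : ℂ) * Complex.exp ((i.1 : ℂ) * (2 * Real.pi * Complex.I * (m : ℂ) / d)) := by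
          rw [hsq, ← Complex.exp_add, harg]
      _ = (((d : ℝ)⁻¹ : ℝ) : ℂ) * ζ ^ (i.1) := by
          rw [hζ, Complex.exp_nat_mul]
  rw [Finset.sum_congr rfl fun i _ => hterm i, ← Finset.mul_sum]
  have hrange : ∑ i : Fin d, ζ ^ (i.1) = ∑ k ∈ Finset.range d, ζ ^ k :=
    Fin.sum_univ_eq_sum_range (fun k => ζ ^ k) d
  rw [hrange]
  by_cases hjj : j = j'
  · subst hjj
    have hm0 : (m : ℂ) = 0 := by rw [hm]; push_cast; ring
    have hζ1 : ζ = 1 := by rw [hζ, hm0]; simp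
    rw [hζ1]
    simp only [one_pow, Finset.sum_const, Finset.card_range, nsmul_eq_mul, mul_one]
    simp only [if_true, eq_self_iff_true]
    push_cast
    field_simp
  · have hmne : m ≠ 0 := by
      rw [hm]
      intro h
      apply hjj
      have : (j.1 : ℤ) = (j'.1 : ℤ) := by omega
      exact Fin.ext (by exact_mod_cast this)
    have hζd : ζ ^ d = 1 := by
      rw [hζ, ← Complex.exp_nat_mul]
      rw [show (d : ℂ) * (2 * Real.pi * Complex.I * (m : ℂ) / d) = (m : ℂ) * (2 * Real.pi * Complex.I) from by field_simp]
      exact Complex.exp_int_mul_two_pi_mul_I m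
    have hζ1 : ζ ≠ 1 := by
      intro h
      rw [hζ] at h
      obtain ⟨n, hn⟩ := Complex.exp_eq_one_iff.mp h
      have h2 : (m : ℂ) * (2 * Real.pi * Complex.I) = (n : ℂ) * (2 * Real.pi * Complex.I) * d := by
        field_simp at hn
        linear_combination (2 * Real.pi * Complex.I) * hn
      have h3 : (m : ℂ) = (n : ℂ) * d := by
        have h4 := mul_right_cancel₀ Complex.two_pi_I_ne_zero
          (by linear_combination h2 : (m : ℂ) * (2 * ↑Real.pi * Complex.I) = ((n : ℂ) * d) * (2 * ↑Real.pi * Complex.I))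
        exact h4
      have h5 : m = n * d := by exact_mod_cast h3
      have h6 : (d : ℤ) ∣ m := ⟨n, by rw [h5]; ring⟩
      have h7 : (d : ℤ) ≤ |m| := Int.le_of_dvd (abs_pos.mpr hmne) ((dvd_abs _ _).mpr h6)
      have h8 : |m| < d := by
        have hj1 := j.2
        have hj2 := j'.2
        rw [hm, abs_lt]
        omega
      omega
    rw [geom_sum_eq hζ1, hζd, sub_self, zero_div, mul_zero, if_neg hjj]

end Part2
section Final

variable {d c : ℕ}

lemma unitary_mulVec_meas {n : ℕ} {W : Mat n} (hW : Wᴴ * W = 1) {F : Fin n → Fin n → ℂ}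
    (hF : IsRankOneMeas F) : IsRankOneMeas (fun j i => ∑ k, W i k * F j k) := by
  intro j j'
  have hWe : ∀ k l : Fin n, (∑ i, (starRingEnd ℂ) (W i k) * W i l) = if k = l then 1 else 0 := by
    intro k l
    have h : (Wᴴ * W) k l = (1 : Mat n) k l := by rw [hW]
    simpa [Matrix.mul_apply, Matrix.conjTranspose_apply, Matrix.one_apply,
      Complex.star_def] using h
  calc ∑ i, star (∑ k, W i k * F j k) * (∑ l, W i l * F j' l)
      = ∑ i, ∑ k, ∑ l, (star (W i k) * star (F j k)) * (W i l * F j' l) := by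
        refine Finset.sum_congr rfl fun i _ => ?_
        rw [star_sum, Finset.sum_mul_sum]
        refine Finset.sum_congr rfl fun k _ => Finset.sum_congr rfl fun l _ => ?_
        rw [star_mul']
    _ = ∑ k, ∑ i, ∑ l, (star (W i k) * star (F j k)) * (W i l * F j' l) := Finset.sum_comm
    _ = ∑ k, ∑ l, ∑ i, (star (W i k) * star (F j k)) * (W i l * F j' l) :=
        Finset.sum_congr rfl fun k _ => Finset.sum_comm
    _ = ∑ k, ∑ l, (star (F j k) * F j' l) * ∑ i, star (W i k) * W i l := by
        refine Finset.sum_congr rfl fun k _ => Finset.sum_congr rfl fun l _ => ?_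
        rw [Finset.mul_sum]
        exact Finset.sum_congr rfl fun i _ => by ring
    _ = ∑ k, star (F j k) * F j' k := by
        refine Finset.sum_congr rfl fun k _ => ?_
        simp [hWe, Complex.star_def, mul_ite, mul_one, mul_zero, Finset.sum_ite_eq]
    _ = if j = j' then 1 else 0 := hF j j'

lemma fourier_abs_sq (hd : 0 < d) (j m : Fin d) :
    star (FourierV d j m) * FourierV d j m = (((d : ℝ)⁻¹ : ℝ) : ℂ) := by
  have hsq : (((Real.sqrt d)⁻¹ : ℝ) : ℂ) * (((Real.sqrt d)⁻¹ : ℝ) : ℂ)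
      = (((d : ℝ)⁻¹ : ℝ) : ℂ) := by
    rw [← Complex.ofReal_mul]
    congr 1
    rw [← mul_inv]
    congr 1
    exact Real.mul_self_sqrt (by positivity)
  show star ((((Real.sqrt d)⁻¹ : ℝ) : ℂ) * Complex.exp (2 * Real.pi * Complex.I * (j.1 * m.1) / d))
      * ((((Real.sqrt d)⁻¹ : ℝ) : ℂ) * Complex.exp (2 * Real.pi * Complex.I * (j.1 * m.1) / d))
      = (((d : ℝ)⁻¹ : ℝ) : ℂ)
  rw [star_mul']
  have h1 : star ((((Real.sqrt d)⁻¹ : ℝ) : ℂ)) = (((Real.sqrt d)⁻¹ : ℝ) : ℂ) := by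
    simp [Complex.star_def, Complex.conj_ofReal]
  have h2 : star (Complex.exp (2 * Real.pi * Complex.I * (j.1 * m.1) / d))
      = Complex.exp ((starRingEnd ℂ) (2 * Real.pi * Complex.I * (j.1 * m.1) / d)) := by
    rw [Complex.star_def, ← Complex.exp_conj]
  rw [h1, h2]
  have harg : (starRingEnd ℂ) (2 * Real.pi * Complex.I * (j.1 * m.1) / d)
      + 2 * Real.pi * Complex.I * (j.1 * m.1) / d = 0 := by
    simp only [map_div₀, _root_.map_mul, Complex.conj_I, Complex.conj_ofReal,
      _root_.map_natCast, _root_.map_ofNat]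
    ring
  calc (((Real.sqrt d)⁻¹ : ℝ) : ℂ) * Complex.exp ((starRingEnd ℂ) (2 * Real.pi * Complex.I * (j.1 * m.1) / d))
        * ((((Real.sqrt d)⁻¹ : ℝ) : ℂ) * Complex.exp (2 * Real.pi * Complex.I * (j.1 * m.1) / d))
      = ((((Real.sqrt d)⁻¹ : ℝ) : ℂ) * (((Real.sqrt d)⁻¹ : ℝ) : ℂ))
        * (Complex.exp ((starRingEnd ℂ) (2 * Real.pi * Complex.I * (j.1 * m.1) / d))
          * Complex.exp (2 * Real.pi * Complex.I * (j.1 * m.1) / d)) := by ring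
    _ = (((d : ℝ)⁻¹ : ℝ) : ℂ) * Complex.exp ((starRingEnd ℂ) (2 * Real.pi * Complex.I * (j.1 * m.1) / d)
          + 2 * Real.pi * Complex.I * (j.1 * m.1) / d) := by
        rw [hsq, Complex.exp_add]
    _ = (((d : ℝ)⁻¹ : ℝ) : ℂ) := by rw [harg, Complex.exp_zero, mul_one]

lemma exists_unbiased (hd : 0 < d) {σA : Mat d} (hσ : IsDensity σA) :
    ∃ v : Fin d → Fin d → ℂ, IsRankOneMeas v ∧
      ∀ j, (∑ k, ∑ k', star (v j k) * σA k k' * v j k') = (((d : ℝ)⁻¹ : ℝ) : ℂ) := by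
  have hH : σA.IsHermitian := hσ.1.1
  set W : Mat d := (hH.eigenvectorUnitary : Mat d) with hWdef
  have hWu : Wᴴ * W = 1 := by
    have h := Unitary.coe_star_mul_self hH.eigenvectorUnitary
    rwa [Matrix.star_eq_conjTranspose] at h
  refine ⟨fun j i => ∑ k, W i k * FourierV d j k,
    unitary_mulVec_meas hWu (fourier_meas hd), ?_⟩
  intro j
  show ∑ k, ∑ k', star ((W *ᵥ FourierV d j) k) * σA k k' * (W *ᵥ FourierV d j) k'
      = (((d : ℝ)⁻¹ : ℝ) : ℂ)
  rw [← quad_eq]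
  have hkey : dotProduct (star (W *ᵥ FourierV d j)) (σA *ᵥ (W *ᵥ FourierV d j))
      = dotProduct (star (FourierV d j)) ((Wᴴ * σA * W) *ᵥ FourierV d j) := by
    simp only [Matrix.star_mulVec, Matrix.dotProduct_mulVec, Matrix.vecMul_vecMul,
      Matrix.mulVec_mulVec, Matrix.mul_assoc]
  rw [hkey]
  have hdiag : Wᴴ * σA * W = Matrix.diagonal (RCLike.ofReal ∘ hH.eigenvalues) := by
    have h := hH.conjStarAlgAut_star_eigenvectorUnitary
    simp only [Unitary.conjStarAlgAut_apply, Unitary.coe_star, star_star,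
      Matrix.star_eq_conjTranspose, Matrix.conjTranspose_conjTranspose] at h
    exact h
  rw [hdiag]
  have hdot : dotProduct (star (FourierV d j))
      ((Matrix.diagonal (RCLike.ofReal ∘ hH.eigenvalues)) *ᵥ FourierV d j)
      = ∑ m, ((hH.eigenvalues m : ℝ) : ℂ) * (star (FourierV d j m) * FourierV d j m) := by
    simp only [dotProduct, Matrix.mulVec_diagonal, Pi.star_apply, Function.comp_apply]
    refine Finset.sum_congr rfl fun m _ => ?_
    rw [show (RCLike.ofReal (hH.eigenvalues m) : ℂ) = ((hH.eigenvalues m : ℝ) : ℂ) from rfl]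
    ring
  rw [hdot]
  rw [Finset.sum_congr rfl fun m _ => by rw [fourier_abs_sq hd j m]]
  rw [← Finset.sum_mul]
  have htrace : (∑ m, ((hH.eigenvalues m : ℝ) : ℂ)) = 1 := by
    rw [← trace_eq_sum_eigenvalues hH]
    exact hσ.2
  rw [htrace, one_mul]

lemma kron_density {a b : ℕ} {A : Mat a} {B : Mat b} (hA : IsDensity A) (hB : IsDensity B) :
    IsDensity (A ⊗ₖ B) := by
  constructor
  · exact Matrix.PosSemidef.kronecker hA.1 hB.1
  · rw [Matrix.trace_kronecker, hA.2, hB.2, mul_one]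

lemma gval_unif_le (hd : 0 < d) {T : Matrix (Fin d) (Fin c) ℝ}
    (hT0 : ∀ w z, T w z = if w.1 = 0 then 1 else 0) {σB : Mat d} (hσB : IsDensity σB)
    {u : Fin d → Fin d → ℂ} (hu : IsRankOneMeas u) (f : Fin d → Fin c) :
    gval T (((((d : ℝ)⁻¹ : ℝ) : ℂ) • (1 : Mat d)) ⊗ₖ σB) u f ≤ (d : ℝ)⁻¹ := by
  set q : Fin d → ℂ := fun z => ∑ j1, ∑ j2, star (u z j1) * σB j1 j2 * u z j2 with hq
  have hq0 : ∀ z, 0 ≤ q z := fun z => quad_nonneg hσB.1 (u z)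
  have hqre : ∀ z, q z = (((q z).re : ℝ) : ℂ) := fun z => (cnonneg_eq_re (hq0 z)).1
  have hqnn : ∀ z, 0 ≤ (q z).re := fun z => (cnonneg_eq_re (hq0 z)).2
  have hX : ∀ z, ptraceB (((1 : Mat d) ⊗ₖ projv (u z))
        * (((((d : ℝ)⁻¹ : ℝ) : ℂ) • (1 : Mat d)) ⊗ₖ σB) * ((1 : Mat d) ⊗ₖ projv (u z)))
      = ((((q z).re * (d : ℝ)⁻¹ : ℝ) : ℝ) : ℂ) • (1 : Mat d) := by
    intro z
    rw [X_kron (meas_unit hu z)]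
    have hqz : (∑ j1, ∑ j2, star (u z j1) * σB j1 j2 * u z j2)
        = (((q z).re : ℝ) : ℂ) := hqre z
    rw [hqz, smul_smul]
    congr 1
    push_cast
    ring
  have hsum : ∑ z, (q z).re = 1 := by
    have h1 : ∑ z, q z = 1 := sum_q hσB.2 hu
    have h2 : (∑ z, q z).re = 1 := by rw [h1]; simp
    rw [← h2, Complex.re_sum]
  have hwcol : ∀ z : Fin d, (∑ w : Fin d, T w (f z) * kyFan (w.1 + 1)
        (ptraceB (((1 : Mat d) ⊗ₖ projv (u z))
          * (((((d : ℝ)⁻¹ : ℝ) : ℂ) • (1 : Mat d)) ⊗ₖ σB) * ((1 : Mat d) ⊗ₖ projv (u z)))))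
      = kyFan 1 (ptraceB (((1 : Mat d) ⊗ₖ projv (u z))
          * (((((d : ℝ)⁻¹ : ℝ) : ℂ) • (1 : Mat d)) ⊗ₖ σB) * ((1 : Mat d) ⊗ₖ projv (u z)))) := by
    intro z
    rw [Finset.sum_eq_single (⟨0, hd⟩ : Fin d)]
    · rw [hT0]
      norm_num
    · intro w _ hne
      rw [hT0]
      have hw : w.1 ≠ 0 := fun h => hne (Fin.ext h)
      simp [hw]
    · intro h
      exact absurd (Finset.mem_univ _) h
  calc gval T (((((d : ℝ)⁻¹ : ℝ) : ℂ) • (1 : Mat d)) ⊗ₖ σB) u f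
      = ∑ z, kyFan 1 (ptraceB (((1 : Mat d) ⊗ₖ projv (u z))
          * (((((d : ℝ)⁻¹ : ℝ) : ℂ) • (1 : Mat d)) ⊗ₖ σB) * ((1 : Mat d) ⊗ₖ projv (u z)))) := by
        unfold gval
        exact Finset.sum_congr rfl fun z _ => hwcol z
    _ ≤ ∑ z, (q z).re * (d : ℝ)⁻¹ := by
        refine Finset.sum_le_sum fun z _ => ?_
        rw [hX z]
        exact kyFan_one_smul_one (mul_nonneg (hqnn z) (by positivity))
    _ = (d : ℝ)⁻¹ := by rw [← Finset.sum_mul, hsum, one_mul]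

lemma R0_unif_le (hd : 0 < d) {T : Matrix (Fin d) (Fin c) ℝ}
    (hT0 : ∀ w z, T w z = if w.1 = 0 then 1 else 0) {σB : Mat d} (hσB : IsDensity σB) :
    R0 T (((((d : ℝ)⁻¹ : ℝ) : ℂ) • (1 : Mat d)) ⊗ₖ σB) ≤ (d : ℝ)⁻¹ := by
  rw [R0_eq]
  exact Real.iSup_le (fun u => Real.iSup_le
    (fun f => gval_unif_le hd hT0 hσB u.2 f) (by positivity)) (by positivity)

end Final
/-- product states are strictly game-majorized by the maximally
entangled state. -/
theorem product_state_game_majorized {d : ℕ} (hd : 2 ≤ d)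
    (σA σB : Mat d) (hσA : IsDensity σA) (hσB : IsDensity σB) :
    (∀ (c : ℕ), 0 < c → ∀ T : Matrix (Fin d) (Fin c) ℝ, ColStochastic T →
        ∀ p : ℝ, 0 ≤ p → p ≤ 1 → Rgame T p (σA ⊗ₖ σB) ≤ Rgame T p (maxEnt d)) ∧
    (∀ (c : ℕ), 0 < c → ∀ T : Matrix (Fin d) (Fin c) ℝ,
        (∀ w z, T w z = if w.1 = 0 then 1 else 0) →
        Rgame T 1 (σA ⊗ₖ σB) ≤ 1 / (d : ℝ) ∧ (1 / (d : ℝ) < 1 ∧ Rgame T 1 (maxEnt d) = 1)) := by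
  have hd0 : 0 < d := by omega
  have hprod : IsDensity (σA ⊗ₖ σB) := kron_density hσA hσB
  constructor
  · intro c hc T hT p hp0 hp1
    rw [Rgame_maxEnt hd0 hc hT p]
    exact Rgame_le_one hd0 hT hprod hp0 hp1
  · intro c hc T hTdef
    have hT : ColStochastic T := by
      constructor
      · intro w z
        rw [hTdef]
        split <;> norm_num
      · intro z
        rw [Finset.sum_congr rfl fun w _ => hTdef w z]
        rw [Finset.sum_eq_single (⟨0, hd0⟩ : Fin d)]
        · norm_num
        · intro w _ hne
          have hw : w.1 ≠ 0 := fun h => hne (Fin.ext h)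
          simp [hw]
        · intro h
          exact absurd (Finset.mem_univ _) h
    refine ⟨?_, ?_, ?_⟩
    · -- inequality for the product state
      rw [Rgame_eq, one_mul, sub_self, zero_mul, add_zero]
      obtain ⟨v, hv, hunb⟩ := exists_unbiased hd0 hσA
      have hpinch := pinch_kron σB hv hunb
      have hbdd : BddBelow (Set.range fun v' : {v' : Fin d → Fin d → ℂ // IsRankOneMeas v'} =>
          R0 T (∑ j, (projv (v'.1 j) ⊗ₖ (1 : Mat d)) * (σA ⊗ₖ σB)
            * (projv (v'.1 j) ⊗ₖ (1 : Mat d)))) :=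
        ⟨0, by rintro x ⟨v', rfl⟩; exact R0_nonneg hT.1 _⟩
      refine le_trans (le_trans (ciInf_le hbdd ⟨v, hv⟩) ?_) (le_of_eq (one_div (d : ℝ)).symm)
      show R0 T (∑ j, (projv (v j) ⊗ₖ (1 : Mat d)) * (σA ⊗ₖ σB)
          * (projv (v j) ⊗ₖ (1 : Mat d))) ≤ (d : ℝ)⁻¹
      rw [hpinch]
      exact R0_unif_le hd0 hTdef hσB
    · rw [div_lt_one (by positivity : (0:ℝ) < (d : ℝ))]
      exact_mod_cast (by omega : 1 < d)
    · exact Rgame_maxEnt hd0 hc hT 1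

end
end

section
/- Let N and M be replacement channels, N(X) = Tr[X]·ρ_N and M(X) = Tr[X]·ρ_M for fixed density matrices ρ_N and ρ_M. Then M is game-majorized by N in the channel sense (R_{ρ_{ABX}}(M) ≤ R_{ρ_{ABX}}(N) for every quantum channel gambling game ρ_{ABX}) if and only if the eigenvalue vector of ρ_M is majorized by that of ρ_N, i.e. λ(ρ_M) ≺ λ(ρ_N). -/
open Matrix Kronecker
open scoped ComplexOrder

noncomputable section

open scoped Classical

section comb
variable {ι κ μ : Type} [Fintype ι] [DecidableEq ι] [Fintype κ] [DecidableEq κ]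
  [Fintype μ] [DecidableEq μ]

lemma sum_le_sumTopK (k : ℕ) (f : ι → ℝ) (s : Finset ι) (hs : s.card ≤ k) :
    ∑ i ∈ s, f i ≤ sumTopK k f := by
  apply Finset.le_sup' (fun s => ∑ i ∈ s, f i)
    (Finset.mem_filter.mpr ⟨Finset.mem_powerset.mpr (Finset.subset_univ s), hs⟩)

lemma sumTopK_le {k : ℕ} {f : ι → ℝ} {c : ℝ}
    (h : ∀ s : Finset ι, s.card ≤ k → ∑ i ∈ s, f i ≤ c) : sumTopK k f ≤ c :=
  Finset.sup'_le _ _ fun s hs => h s (Finset.mem_filter.mp hs).2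

lemma exists_sumTopK_attained (k : ℕ) (f : ι → ℝ) :
    ∃ s : Finset ι, s.card ≤ k ∧ sumTopK k f = ∑ i ∈ s, f i := by
  obtain ⟨s, hs, h⟩ := Finset.exists_mem_eq_sup'
    (⟨∅, Finset.mem_filter.mpr ⟨Finset.mem_powerset.mpr (Finset.empty_subset _), by simp⟩⟩ :
      (Finset.univ.powerset.filter fun s : Finset ι => s.card ≤ k).Nonempty)
    (fun s => ∑ i ∈ s, f i)
  exact ⟨s, (Finset.mem_filter.mp hs).2, h⟩

lemma sumTopK_zero (f : ι → ℝ) : sumTopK 0 f = 0 := by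
  refine le_antisymm (sumTopK_le fun s hs => ?_) ?_
  · have : s = ∅ := Finset.card_eq_zero.mp (Nat.le_zero.mp hs)
    simp [this]
  · simpa using sum_le_sumTopK 0 f ∅ (by simp)

lemma exists_finset_of_multiset_le (g : κ → ℝ) (m : Multiset ℝ) :
    ∀ u : Finset κ, m ≤ u.val.map g →
      ∃ t : Finset κ, t ⊆ u ∧ t.card = Multiset.card m ∧ ∑ i ∈ t, g i = m.sum := by
  induction m using Multiset.induction with
  | empty => intro u _; exact ⟨∅, by simp, by simp, by simp⟩
  | cons a m ih =>
    intro u hle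
    have ha : a ∈ u.val.map g := Multiset.mem_of_le hle (Multiset.mem_cons_self a m)
    obtain ⟨i, hi, hgi⟩ := Multiset.mem_map.mp ha
    have hiu : i ∈ u := hi
    have hm : m ≤ (u.erase i).val.map g := by
      have h1 : a ::ₘ ((u.erase i).val.map g) = u.val.map g := by
        rw [Finset.erase_val]
        rw [← hgi, ← Multiset.map_cons, Multiset.cons_erase hi]
      obtain ⟨c, hc⟩ := Multiset.le_iff_exists_add.mp hle
      have : a ::ₘ ((u.erase i).val.map g) = a ::ₘ (m + c) := by
        rw [h1, hc, Multiset.cons_add]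
      rw [(Multiset.cons_inj_right a).mp this]
      exact Multiset.le_add_right m c
    obtain ⟨t, htu, htc, hts⟩ := ih (u.erase i) hm
    have hit : i ∉ t := fun h => (Finset.ne_of_mem_erase (htu h)) rfl
    refine ⟨insert i t, ?_, ?_, ?_⟩
    · intro x hx
      rcases Finset.mem_insert.mp hx with rfl | hx
      · exact hiu
      · exact Finset.mem_of_mem_erase (htu hx)
    · rw [Finset.card_insert_of_notMem hit, htc]; simp
    · rw [Finset.sum_insert hit, hts, Multiset.sum_cons, hgi]

lemma sumTopK_congr {f : ι → ℝ} {g : κ → ℝ}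
    (h : Multiset.map f Finset.univ.val = Multiset.map g Finset.univ.val) (k : ℕ) :
    sumTopK k f = sumTopK k g := by
  have key : ∀ {α β : Type} [Fintype α] [DecidableEq α] [Fintype β] [DecidableEq β]
      (f : α → ℝ) (g : β → ℝ),
      Multiset.map f Finset.univ.val = Multiset.map g Finset.univ.val →
      sumTopK k f ≤ sumTopK k g := by
    intro α β _ _ _ _ f g h
    apply sumTopK_le
    intro s hs
    have hle : s.val.map f ≤ Finset.univ.val.map g := by
      rw [← h]
      exact Multiset.map_le_map (Finset.val_le_iff.mpr (Finset.subset_univ s))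
    obtain ⟨t, _, htc, hts⟩ := exists_finset_of_multiset_le g (s.val.map f) Finset.univ hle
    have h1 : ∑ i ∈ s, f i = (s.val.map f).sum := rfl
    have h2 : t.card ≤ k := by
      rw [htc]; simpa using hs
    rw [h1, ← hts]
    exact sum_le_sumTopK k g t h2
  exact le_antisymm (key f g h) (key g f h.symm)

lemma sumTopK_mul_le {f : ι → ℝ} {h : κ → ℝ} {g : μ → ℝ} (hg : ∀ j, 0 ≤ g j)
    (hfh : ∀ j : ℕ, sumTopK j f ≤ sumTopK j h) (k : ℕ) :
    sumTopK k (fun p : ι × μ => f p.1 * g p.2) ≤ sumTopK k (fun p : κ × μ => h p.1 * g p.2) := by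
  apply sumTopK_le
  intro s hs
  set sj : μ → Finset ι := fun j => (s.filter fun p => p.2 = j).image Prod.fst with hsj
  have hinj : ∀ j : μ, Set.InjOn Prod.fst ((s.filter fun p : ι × μ => p.2 = j) : Set (ι × μ)) := by
    intro j p hp q hq hpq
    have hp2 := (Finset.mem_filter.mp hp).2
    have hq2 := (Finset.mem_filter.mp hq).2
    exact Prod.ext hpq (hp2.trans hq2.symm)
  have hcard : ∀ j, (sj j).card = (s.filter fun p => p.2 = j).card := fun j =>
    Finset.card_image_of_injOn (hinj j)
  have hsum : ∑ p ∈ s, f p.1 * g p.2 = ∑ j : μ, g j * ∑ i ∈ sj j, f i := by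
    rw [← Finset.sum_fiberwise s (fun p => p.2) (fun p => f p.1 * g p.2)]
    refine Finset.sum_congr rfl fun j _ => ?_
    rw [hsj, Finset.sum_image (hinj j), Finset.mul_sum]
    refine Finset.sum_congr rfl fun p hp => ?_
    rw [(Finset.mem_filter.mp hp).2]; ring
  -- choose attaining sets for h
  have hatt := fun j : μ => exists_sumTopK_attained (sj j).card h
  choose t ht1 ht2 using hatt
  set T : Finset (κ × μ) := Finset.univ.biUnion (fun j => (t j).image (fun i => (i, j))) with hT
  have hdisj : ∀ x ∈ (Finset.univ : Finset μ), ∀ y ∈ Finset.univ, x ≠ y →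
      Disjoint ((t x).image (fun i => (i, x))) ((t y).image (fun i => (i, y))) := by
    intro x _ y _ hxy
    rw [Finset.disjoint_left]
    rintro ⟨i, j⟩ hx hy
    obtain ⟨_, _, h1⟩ := Finset.mem_image.mp hx
    obtain ⟨_, _, h2⟩ := Finset.mem_image.mp hy
    exact hxy ((((Prod.mk.injEq _ _ _ _).mp h1).2).trans (((Prod.mk.injEq _ _ _ _).mp h2).2).symm)
  have hTcard : T.card ≤ k := by
    rw [hT, Finset.card_biUnion hdisj]
    calc ∑ j : μ, ((t j).image (fun i => (i, j))).card
        = ∑ j : μ, (t j).card := by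
          refine Finset.sum_congr rfl fun j _ => ?_
          exact Finset.card_image_of_injective _ (fun a b hab => ((Prod.mk.injEq _ _ _ _).mp hab).1)
      _ ≤ ∑ j : μ, (sj j).card := Finset.sum_le_sum fun j _ => ht1 j
      _ = ∑ j : μ, (s.filter fun p => p.2 = j).card := Finset.sum_congr rfl fun j _ => hcard j
      _ = s.card := (Finset.card_eq_sum_card_fiberwise (fun p _ => Finset.mem_univ p.2)).symm
      _ ≤ k := hs
  have hTsum : ∑ p ∈ T, h p.1 * g p.2 = ∑ j : μ, g j * sumTopK (sj j).card h := by
    rw [hT, Finset.sum_biUnion (fun x hx y hy hxy => hdisj x hx y hy hxy)]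
    refine Finset.sum_congr rfl fun j _ => ?_
    rw [Finset.sum_image (fun a _ b _ hab => ((Prod.mk.injEq _ _ _ _).mp hab).1), ht2 j,
      Finset.mul_sum]
    exact Finset.sum_congr rfl fun i _ => by ring
  calc ∑ p ∈ s, f p.1 * g p.2 = ∑ j : μ, g j * ∑ i ∈ sj j, f i := hsum
    _ ≤ ∑ j : μ, g j * sumTopK (sj j).card h := by
        refine Finset.sum_le_sum fun j _ => mul_le_mul_of_nonneg_left ?_ (hg j)
        exact le_trans (sum_le_sumTopK _ f (sj j) le_rfl) (hfh (sj j).card)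
    _ = ∑ p ∈ T, h p.1 * g p.2 := hTsum.symm
    _ ≤ sumTopK k (fun p : κ × μ => h p.1 * g p.2) := sum_le_sumTopK _ _ T hTcard

end comb

section spec
open Polynomial
variable {ι κ : Type} [Fintype ι] [DecidableEq ι] [Fintype κ] [DecidableEq κ]

lemma my_charpoly_diag (v : ι → ℂ) :
    (Matrix.diagonal v).charpoly = ∏ i, (X - C (v i)) := by
  unfold Matrix.charpoly
  have : (Matrix.diagonal v).charmatrix = Matrix.diagonal (fun i => (X : ℂ[X]) - C (v i)) := by
    ext i j
    by_cases h : i = j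
    · subst h; simp
    · rw [Matrix.charmatrix_apply_ne _ _ _ h, Matrix.diagonal_apply_ne _ h,
        Matrix.diagonal_apply_ne _ h]
      simp
  rw [this, Matrix.det_diagonal]

lemma my_charmatrix_eq (M : Matrix ι ι ℂ) :
    M.charmatrix = (X : ℂ[X]) • (1 : Matrix ι ι ℂ[X]) - M.map (C : ℂ →+* ℂ[X]) := by
  ext i j
  rw [Matrix.charmatrix_apply]
  by_cases h : i = j <;>
    simp [h, Matrix.smul_apply, Matrix.one_apply, Matrix.diagonal_apply, Matrix.sub_apply,
      Matrix.map_apply]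

lemma my_charpoly_conj {U A : Matrix ι ι ℂ} (hU : U ∈ Matrix.unitaryGroup ι ℂ) :
    (U * A * Uᴴ).charpoly = A.charpoly := by
  have hU1 : U * Uᴴ = 1 := by
    have := Matrix.mem_unitaryGroup_iff.mp hU
    rwa [Matrix.star_eq_conjTranspose] at this
  have key : (U * A * Uᴴ).charmatrix =
      U.map (C : ℂ →+* ℂ[X]) * A.charmatrix * Uᴴ.map (C : ℂ →+* ℂ[X]) := by
    rw [my_charmatrix_eq, my_charmatrix_eq]
    rw [Matrix.mul_sub, Matrix.sub_mul]
    congr 1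
    · rw [mul_smul_comm, mul_one, smul_mul_assoc, ← Matrix.map_mul, hU1]
      congr 1
      ext i j
      by_cases h : i = j <;> simp [h, Matrix.map_apply, Matrix.one_apply]
    · rw [← Matrix.map_mul, ← Matrix.map_mul]
  unfold Matrix.charpoly
  rw [key, Matrix.det_mul, Matrix.det_mul]
  have : U.map (C : ℂ →+* ℂ[X]) * Uᴴ.map (C : ℂ →+* ℂ[X]) = 1 := by
    rw [← Matrix.map_mul, hU1]
    ext i j
    by_cases h : i = j <;> simp [h, Matrix.map_apply, Matrix.one_apply]
  have hdet : (U.map (C : ℂ →+* ℂ[X])).det * (Uᴴ.map (C : ℂ →+* ℂ[X])).det = 1 := by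
    rw [← Matrix.det_mul, this, Matrix.det_one]
  calc (U.map (C : ℂ →+* ℂ[X])).det * A.charmatrix.det * (Uᴴ.map (C : ℂ →+* ℂ[X])).det
      = ((U.map (C : ℂ →+* ℂ[X])).det * (Uᴴ.map (C : ℂ →+* ℂ[X])).det) * A.charmatrix.det := by
        ring
    _ = A.charmatrix.det := by rw [hdet, one_mul]

lemma my_charpoly_hermitian {A : Matrix ι ι ℂ} (hA : A.IsHermitian) :
    A.charpoly = ∏ i, (X - C ((hA.eigenvalues i : ℂ))) := by
  conv_lhs => rw [hA.spectral_theorem, Unitary.conjStarAlgAut_apply]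
  rw [show (star (hA.eigenvectorUnitary : Matrix ι ι ℂ)) = (hA.eigenvectorUnitary : Matrix ι ι ℂ)ᴴ
      from Matrix.star_eq_conjTranspose _]
  rw [my_charpoly_conj hA.eigenvectorUnitary.2, my_charpoly_diag]
  rfl

lemma eig_multiset_eq {A : Matrix ι ι ℂ} (hA : A.IsHermitian)
    {U : Matrix ι ι ℂ} (hU : U ∈ Matrix.unitaryGroup ι ℂ) (d : ι → ℝ)
    (h : A = U * Matrix.diagonal (fun i => ((d i : ℂ))) * Uᴴ) :
    Multiset.map hA.eigenvalues Finset.univ.val = Multiset.map d Finset.univ.val := by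
  have h1 : A.charpoly = ∏ i, (X - C ((d i : ℂ))) := by
    conv_lhs => rw [h]
    rw [my_charpoly_conj hU, my_charpoly_diag]
  have h2 := my_charpoly_hermitian hA
  have e1 : ∀ (v : ι → ℂ), (∏ i, (X - C (v i)))
      = ((Finset.univ.val.map v).map (fun a => X - C a)).prod := by
    intro v; rw [Multiset.map_map]; rfl
  have h3 : (Multiset.map (fun i => ((hA.eigenvalues i : ℂ))) Finset.univ.val)
      = Multiset.map (fun i => ((d i : ℂ))) Finset.univ.val := by
    have := congrArg Polynomial.roots (h2.symm.trans h1)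
    rwa [e1, e1, Polynomial.roots_multiset_prod_X_sub_C,
      Polynomial.roots_multiset_prod_X_sub_C] at this
  have h4 := congrArg (Multiset.map Complex.re) h3
  rw [Multiset.map_map, Multiset.map_map] at h4
  simpa [Function.comp] using h4

end spec


section matlemmas
variable {ι κ : Type} [Fintype ι] [DecidableEq ι] [Fintype κ] [DecidableEq κ]

lemma kron_conjTranspose_s14 (A : Matrix ι ι ℂ) (B : Matrix κ κ ℂ) :
    (A ⊗ₖ B)ᴴ = Aᴴ ⊗ₖ Bᴴ := by
  ext p q
  simp [Matrix.conjTranspose_apply, Matrix.kroneckerMap_apply, star_mul']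

lemma kron_unitary {U : Matrix ι ι ℂ} {V : Matrix κ κ ℂ}
    (hU : U ∈ Matrix.unitaryGroup ι ℂ) (hV : V ∈ Matrix.unitaryGroup κ ℂ) :
    (U ⊗ₖ V) ∈ Matrix.unitaryGroup (ι × κ) ℂ := by
  rw [Matrix.mem_unitaryGroup_iff] at *
  rw [Matrix.star_eq_conjTranspose] at *
  rw [kron_conjTranspose_s14, ← Matrix.mul_kronecker_mul, hU, hV, Matrix.one_kronecker_one]

open scoped MatrixOrder in
lemma my_psd_eq_star_mul_self {n : Type} [Fintype n] [DecidableEq n] {A : Matrix n n ℂ}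
    (hA : A.PosSemidef) : ∃ B : Matrix n n ℂ, A = Bᴴ * B := by
  obtain ⟨X, hX, -, hXA⟩ :=
    CFC.exists_sqrt_of_isSelfAdjoint_of_quasispectrumRestricts hA.isHermitian
      (QuasispectrumRestricts.nnreal_of_nonneg hA.nonneg)
  exact ⟨X, by rw [← hXA, ← Matrix.star_eq_conjTranspose, hX.star_eq]⟩

lemma kron_posSemidef {A : Matrix ι ι ℂ} {B : Matrix κ κ ℂ}
    (hA : A.PosSemidef) (hB : B.PosSemidef) : (A ⊗ₖ B).PosSemidef := by
  obtain ⟨P, hP⟩ := my_psd_eq_star_mul_self hA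
  obtain ⟨Q, hQ⟩ := my_psd_eq_star_mul_self hB
  rw [hP, hQ, Matrix.mul_kronecker_mul, ← kron_conjTranspose_s14]
  exact Matrix.posSemidef_conjTranspose_mul_self _

lemma kyFan_eq {X : Matrix ι ι ℂ} (h : X.IsHermitian) (k : ℕ) :
    kyFan k X = sumTopK k h.eigenvalues := dif_pos h

lemma kyFan_kron {A : Matrix ι ι ℂ} {B : Matrix κ κ ℂ}
    (hA : A.PosSemidef) (hB : B.PosSemidef) (k : ℕ) :
    kyFan k (A ⊗ₖ B)
      = sumTopK k (fun p : ι × κ => hA.1.eigenvalues p.1 * hB.1.eigenvalues p.2) := by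
  have hAB := kron_posSemidef hA hB
  rw [kyFan_eq hAB.1]
  apply sumTopK_congr
  apply eig_multiset_eq hAB.1 (kron_unitary hA.1.eigenvectorUnitary.2 hB.1.eigenvectorUnitary.2)
  conv_lhs => rw [hA.1.spectral_theorem, hB.1.spectral_theorem, Unitary.conjStarAlgAut_apply,
    Unitary.conjStarAlgAut_apply]
  rw [Matrix.star_eq_conjTranspose, Matrix.star_eq_conjTranspose,
    Matrix.mul_kronecker_mul, Matrix.mul_kronecker_mul, ← kron_conjTranspose_s14,
    Matrix.diagonal_kronecker_diagonal]
  congr 2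
  ext p
  simp [Function.comp, Complex.ofReal_mul]
end matlemmas

section channel

lemma lTensorId_replacement {m dA b : ℕ} (ρ : Mat m) (X : BMat dA b) :
    lTensorId (fun Y : Mat dA => Y.trace • ρ) X = ρ ⊗ₖ ptraceA X := by
  ext ⟨i, j⟩ ⟨i', j'⟩
  simp only [lTensorId, Matrix.kroneckerMap_apply, Matrix.smul_apply, smul_eq_mul,
    Matrix.trace, Matrix.diag, ptraceA]
  exact mul_comm _ _

lemma choi_replacement {d m : ℕ} (σ : Mat m) :
    choi (fun Y : Mat d => Y.trace • σ) = (1 : Mat d) ⊗ₖ σ := by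
  ext ⟨i, j⟩ ⟨i', j'⟩
  simp only [choi, Matrix.smul_apply, smul_eq_mul, Matrix.kroneckerMap_apply, Matrix.one_apply]
  by_cases h : i = i'
  · subst h; rw [Matrix.trace_single_eq_same]; simp
  · rw [Matrix.trace_single_eq_of_ne (h := h)]; simp [h]

lemma isCPTP_replacement {d m : ℕ} (σ : Mat m) (hσ : IsDensity σ) :
    IsCPTP (fun Y : Mat d => Y.trace • σ) := by
  refine ⟨⟨fun X Y => ?_, fun c X => ?_⟩, fun X => ?_, ?_⟩
  · simp only [Matrix.trace_add, add_smul]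
  · simp only [Matrix.trace_smul, smul_assoc]
  · simp only [Matrix.trace_smul, smul_eq_mul, hσ.2, mul_one]
  · rw [choi_replacement]
    exact kron_posSemidef Matrix.PosSemidef.one hσ.1

lemma uMat_density {n : ℕ} (hn : 0 < n) : IsDensity (uMat n) := by
  constructor
  · have h : uMat n = Matrix.diagonal (fun _ : Fin n => ((n : ℂ))⁻¹) := by
      ext i j
      by_cases h : i = j <;>
        simp [uMat, h, Matrix.smul_apply, Matrix.one_apply, Matrix.diagonal_apply]
    rw [h]
    refine Matrix.PosSemidef.diagonal fun i => ?_
    show (0 : ℂ) ≤ ((n : ℂ))⁻¹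
    rw [show ((n : ℂ))⁻¹ = (((((n : ℝ))⁻¹ : ℝ)) : ℂ) by push_cast; ring]
    rw [Complex.zero_le_real]
    positivity
  · simp only [uMat, Matrix.trace_smul, Matrix.trace_one, smul_eq_mul, Finset.card_univ,
      Fintype.card_fin]
    exact inv_mul_cancel₀ (by exact_mod_cast hn.ne')

lemma ptraceA_posSemidef {a b : ℕ} {X : BMat a b} (h : X.PosSemidef) :
    (ptraceA X).PosSemidef := by
  obtain ⟨B, hB⟩ := my_psd_eq_star_mul_self h
  have key : ptraceA X =
      (Matrix.of fun (r : (Fin a × Fin b) × Fin a) (j : Fin b) => B r.1 (r.2, j))ᴴ *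
      (Matrix.of fun (r : (Fin a × Fin b) × Fin a) (j : Fin b) => B r.1 (r.2, j)) := by
    ext j j'
    simp only [ptraceA, hB, Matrix.mul_apply, Matrix.conjTranspose_apply, Matrix.of_apply]
    rw [Fintype.sum_prod_type]
    exact Finset.sum_comm
  rw [key]
  exact Matrix.posSemidef_conjTranspose_mul_self _

lemma Rch_replacement {n m dA b ℓ : ℕ} (hn : 0 < n) (ρ : Mat m)
    (p : Fin ℓ → ℝ) (ρx : Fin ℓ → BMat dA b) :
    Rch (fun X : Mat n => X.trace • ρ) p ρx
      = ∑ x, p x * kyFan (x.1 + 1) (ρ ⊗ₖ ptraceA (ρx x)) := by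
  have hne : Nonempty {E : Mat dA → Mat n // IsCPTP E} :=
    ⟨⟨fun Y => Y.trace • uMat n, isCPTP_replacement _ (uMat_density hn)⟩⟩
  have step : Rch (fun X : Mat n => X.trace • ρ) p ρx
      = ⨆ _ : {E : Mat dA → Mat n // IsCPTP E},
          ∑ x, p x * kyFan (x.1 + 1) (ρ ⊗ₖ ptraceA (ρx x)) := by
    unfold Rch
    refine iSup_congr fun E => Finset.sum_congr rfl fun x _ => ?_
    have h1 : (fun Y : Mat dA => (E.1 Y).trace • ρ) = fun Y => Y.trace • ρ :=
      funext fun Y => by rw [E.2.2.1 Y]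
    have h2 : lTensorId (fun Y : Mat dA => (E.1 Y).trace • ρ) (ρx x)
        = ρ ⊗ₖ ptraceA (ρx x) := by
      rw [h1]; exact lTensorId_replacement ρ (ρx x)
    rw [h2]
  rw [step]
  exact ciSup_const

lemma eig_one1 (h : (1 : Mat 1).IsHermitian) (j : Fin 1) : h.eigenvalues j = 1 := by
  have hU : (1 : Mat 1) ∈ Matrix.unitaryGroup (Fin 1) ℂ := by
    rw [Matrix.mem_unitaryGroup_iff]; simp
  have hd : (1 : Mat 1) = 1 * Matrix.diagonal (fun _ : Fin 1 => (((1 : ℝ)) : ℂ)) * (1 : Mat 1)ᴴ := by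
    simp
  have := eig_multiset_eq h hU (fun _ => (1 : ℝ)) hd
  have h0 : (Finset.univ : Finset (Fin 1)).val = {0} := rfl
  rw [h0, Multiset.map_singleton, Multiset.map_singleton, Multiset.singleton_inj] at this
  rw [Subsingleton.elim j 0, this]

lemma sumTopK_fst {m : ℕ} (f : Fin m → ℝ) (k : ℕ) :
    sumTopK k (fun p : Fin m × Fin 1 => f p.1) = sumTopK k f := by
  apply sumTopK_congr
  have h1 : Function.Injective (Prod.fst : Fin m × Fin 1 → Fin m) := fun p q h =>
    Prod.ext h (Subsingleton.elim _ _)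
  have h2 : Finset.univ.map ⟨Prod.fst, h1⟩ = (Finset.univ : Finset (Fin m)) :=
    Finset.eq_univ_of_forall fun i => Finset.mem_map.mpr ⟨(i, 0), Finset.mem_univ _, rfl⟩
  have e : Finset.univ.val.map (Prod.fst : Fin m × Fin 1 → Fin m) = Finset.univ.val := by
    calc Finset.univ.val.map (Prod.fst : Fin m × Fin 1 → Fin m)
        = (Finset.univ.map ⟨Prod.fst, h1⟩).val := rfl
      _ = Finset.univ.val := by rw [h2]
  calc Multiset.map (fun p : Fin m × Fin 1 => f p.1) Finset.univ.val
      = Multiset.map f (Finset.univ.val.map Prod.fst) := by rw [Multiset.map_map]; rfl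
    _ = Multiset.map f Finset.univ.val := by rw [e]

lemma ptraceA_one1 : ptraceA (1 : BMat 1 1) = (1 : Mat 1) := by
  ext j j'
  have : j = j' := Subsingleton.elim _ _
  subst this
  simp [ptraceA, Matrix.one_apply]

lemma game_value {mm : ℕ} {ρ : Mat mm} (hρ : ρ.PosSemidef) (k : ℕ) :
    kyFan k (ρ ⊗ₖ ptraceA (1 : BMat 1 1)) = sumTopK k hρ.1.eigenvalues := by
  rw [ptraceA_one1, kyFan_kron hρ Matrix.PosSemidef.one]
  rw [show (fun p : Fin mm × Fin 1 =>
      hρ.1.eigenvalues p.1 * (Matrix.PosSemidef.one (n := Fin 1) (R := ℂ)).1.eigenvalues p.2)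
      = fun p : Fin mm × Fin 1 => hρ.1.eigenvalues p.1 from
    funext fun p => by rw [eig_one1 _ p.2, mul_one]]
  exact sumTopK_fst _ _

end channel

/-- for replacement channels, channel game-majorization reduces to
eigenvalue majorization of the output states. -/
theorem replacement_channel_majorization {nM nN mM mN : ℕ} (hnM : 0 < nM) (hnN : 0 < nN)
    (ρM : Mat mM) (ρN : Mat mN) (hM : IsDensity ρM) (hN : IsDensity ρN) :
    (∀ (dA b ℓ : ℕ) (p : Fin ℓ → ℝ) (ρx : Fin ℓ → BMat dA b),
        (∀ x, 0 ≤ p x) → (∑ x, p x) = 1 → (∀ x, IsDensity (ρx x)) →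
        Rch (fun X : Mat nM => X.trace • ρM) p ρx ≤
          Rch (fun X : Mat nN => X.trace • ρN) p ρx) ↔
      ∀ k : ℕ, sumTopK k hM.1.1.eigenvalues ≤ sumTopK k hN.1.1.eigenvalues := by
  constructor
  · intro H k
    cases k with
    | zero => rw [sumTopK_zero, sumTopK_zero]
    | succ k =>
      have h1 : IsDensity (1 : BMat 1 1) := ⟨Matrix.PosSemidef.one, by simp⟩
      set p : Fin (k + 1) → ℝ := fun x => if x = Fin.last k then 1 else 0 with hp
      have hH := H 1 1 (k + 1) p (fun _ => (1 : BMat 1 1))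
        (fun x => by by_cases h : x = Fin.last k <;> simp [hp, h])
        (by simp [hp])
        (fun _ => h1)
      rw [Rch_replacement hnM ρM p _, Rch_replacement hnN ρN p _] at hH
      have red : ∀ (mm : ℕ) (ρ : Mat mm) (hρ : ρ.PosSemidef),
          ∑ x : Fin (k + 1), p x *
              kyFan (x.1 + 1) (ρ ⊗ₖ ptraceA ((fun _ : Fin (k + 1) => (1 : BMat 1 1)) x))
            = sumTopK (k + 1) hρ.1.eigenvalues := by
        intro mm ρ hρ
        rw [Finset.sum_eq_single (Fin.last k)]
        · rw [hp]
          simp only [if_pos rfl, one_mul]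
          rw [game_value hρ]
          simp [Fin.val_last]
        · intro x _ hx; simp [hp, hx]
        · intro h; exact absurd (Finset.mem_univ _) h
      rw [red mM ρM hM.1, red mN ρN hN.1] at hH
      exact hH
  · intro H dA b ℓ p ρx hp hsum hρx
    rw [Rch_replacement hnM ρM p ρx, Rch_replacement hnN ρN p ρx]
    refine Finset.sum_le_sum fun x _ => mul_le_mul_of_nonneg_left ?_ (hp x)
    have hσ : (ptraceA (ρx x)).PosSemidef := ptraceA_posSemidef (hρx x).1
    rw [kyFan_kron hM.1 hσ, kyFan_kron hN.1 hσ]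
    exact sumTopK_mul_le (fun j => hσ.eigenvalues_nonneg j) H _

end
end
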